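/- arXiv:2104.08833 — 8 statements merged into one kernel-verified Lean document; each statement's English description precedes it below -/
import Mathlib

section
/- For integers n ≥ k ≥ 1 and any real (or complex) λ, the Bell polynomial of the second kind satisfies B_{n,k}(⟨λ⟩₁, ⟨λ⟩₂, ..., ⟨λ⟩_{n-k+1}) = ((-1)^k/k!) · Σ_{l=0}^{k} (-1)^l · C(k,l) · ⟨λl⟩_n, where ⟨x⟩_m = x(x−1)⋯(x−m+1) is the falling factorial. -/
open Finset

/-- Bell polynomials of the second kind `B_{n,k}(x₁,…,x_{n-k+1})`. -/
noncomputable def bellPoly (n k : ℕ) (x : ℕ → ℝ) : ℝ :=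
  ∑ l ∈ (Fintype.piFinset fun _ : Fin n => Finset.range (n + 1)).filter
      (fun l => (∑ i, (i.1 + 1) * l i) = n ∧ (∑ i, l i) = k),
    (n.factorial : ℝ) / (∏ i, ((l i).factorial : ℝ)) *
      ∏ i, (x (i.1 + 1) / ((i.1 + 1).factorial : ℝ)) ^ (l i)

/-- The falling factorial `⟨x⟩_m = x(x-1)⋯(x-m+1)`. -/
noncomputable def fall (x : ℝ) (m : ℕ) : ℝ := ∏ j ∈ Finset.range m, (x - j)


lemma fall_zero (x : ℝ) : fall x 0 = 1 := by simp [fall]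

lemma fall_succ (x : ℝ) (n : ℕ) : fall x (n + 1) = fall x n * (x - n) := by
  simp [fall, Finset.prod_range_succ]

lemma fall_zero_left {n : ℕ} (hn : 1 ≤ n) : fall (0 : ℝ) n = 0 := by
  have : (0 : ℕ) ∈ Finset.range n := Finset.mem_range.mpr hn
  exact Finset.prod_eq_zero this (by simp)

lemma fall_vandermonde (n : ℕ) (x y : ℝ) :
    fall (x + y) n = ∑ i ∈ range (n + 1), (n.choose i : ℝ) * fall x i * fall y (n - i) := by
  induction n with
  | zero => simp [fall_zero]
  | succ n ih =>
    have h1 : ∑ i ∈ range (n + 2), ((n+1).choose i : ℝ) * fall x i * fall y (n + 1 - i)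
        = (∑ i ∈ range (n + 1), (n.choose i : ℝ) * fall x (i+1) * fall y (n - i))
          + ∑ i ∈ range (n + 2), (n.choose i : ℝ) * fall x i * fall y (n + 1 - i) := by
      rw [Finset.sum_range_succ' (fun i => ((n+1).choose i : ℝ) * fall x i * fall y (n + 1 - i)) (n+1),
          Finset.sum_range_succ' (fun i => (n.choose i : ℝ) * fall x i * fall y (n + 1 - i)) (n+1)]
      simp only [Nat.choose_succ_succ, Nat.cast_add, Nat.succ_sub_succ, add_mul,
        Nat.choose_zero_right]
      rw [Finset.sum_add_distrib]
      push_cast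
      ring
    rw [h1, Finset.sum_range_succ (fun i => (n.choose i : ℝ) * fall x i * fall y (n + 1 - i)) (n+1)]
    simp only [Nat.choose_succ_self, Nat.cast_zero, zero_mul, add_zero]
    rw [← Finset.sum_add_distrib]
    have h2 : ∀ i ∈ range (n+1), (n.choose i : ℝ) * fall x (i+1) * fall y (n - i)
        + (n.choose i : ℝ) * fall x i * fall y (n + 1 - i)
        = ((n.choose i : ℝ) * fall x i * fall y (n - i)) * (x + y - n) := by
      intro i hi
      have hi' : i ≤ n := by simpa [Nat.lt_succ_iff] using hi
      have e1 : n + 1 - i = (n - i) + 1 := by omega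
      rw [e1, fall_succ, fall_succ]
      have : ((n - i : ℕ) : ℝ) = (n : ℝ) - i := by
        push_cast [Nat.cast_sub hi']; ring
      rw [this]
      ring
    rw [Finset.sum_congr rfl h2, ← Finset.sum_mul, ← ih, fall_succ]


lemma neg_one_pow_sub {k l : ℕ} (h : l ≤ k) : (-1 : ℝ) ^ (k - l) = (-1) ^ k * (-1) ^ l := by
  have h1 : (-1 : ℝ) ^ (k - l) * (-1) ^ l = (-1) ^ k := by
    rw [← pow_add, Nat.sub_add_cancel h]
  have h2 : ((-1 : ℝ) ^ l) * ((-1 : ℝ) ^ l) = 1 := by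
    rw [← pow_add, ← two_mul, pow_mul, neg_one_sq, one_pow]
  calc (-1 : ℝ) ^ (k - l) = (-1 : ℝ) ^ (k-l) * ((-1)^l * (-1)^l) := by rw [h2, mul_one]
    _ = (-1)^k * (-1)^l := by rw [← mul_assoc, h1]

noncomputable def Tb (lam : ℝ) (n k : ℕ) : ℝ :=
  (-1 : ℝ) ^ k * ∑ l ∈ range (k + 1), (-1 : ℝ) ^ l * (k.choose l : ℝ) * fall (lam * l) n

lemma Tb_zero_right (lam : ℝ) (n : ℕ) : Tb lam n 0 = fall 0 n := by
  simp [Tb]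

lemma Tb_zero_left (lam : ℝ) {k : ℕ} (hk : 1 ≤ k) : Tb lam 0 k = 0 := by
  have h : ((1 : ℝ) + (-1)) ^ k = ∑ l ∈ range (k + 1), (1:ℝ) ^ l * (-1 :ℝ) ^ (k - l) * k.choose l :=
    add_pow 1 (-1) k
  have h0 : ((1 : ℝ) + (-1)) ^ k = 0 := by
    rw [show (1:ℝ) + (-1) = 0 by ring, zero_pow (by omega)]
  rw [Tb, Finset.mul_sum]
  have heq : ∀ l ∈ range (k+1), (-1:ℝ)^k * ((-1 : ℝ) ^ l * (k.choose l : ℝ) * fall (lam * l) 0)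
      = (1:ℝ) ^ l * (-1 :ℝ) ^ (k - l) * k.choose l := by
    intro l hl
    have hl' : l ≤ k := by simpa [Nat.lt_succ_iff] using hl
    rw [fall_zero, neg_one_pow_sub hl', one_pow]
    ring
  rw [Finset.sum_congr rfl heq, ← h, h0]

/-- The key recurrence for `Tb`. -/
lemma Tb_rec (lam : ℝ) (n k : ℕ) (hn : 1 ≤ n) :
    Tb lam n (k + 1)
      = ∑ i ∈ range n, (n.choose (i+1) : ℝ) * fall lam (i+1) * Tb lam (n - (i+1)) k := by
  -- step 1: peel l = 0 and use Pascal
  have hfz : ∀ m : ℕ, fall (lam * (0:ℕ)) n = 0 := by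
    intro m; rw [Nat.cast_zero, mul_zero, fall_zero_left hn]
  have step1 : Tb lam n (k+1) = (-1:ℝ)^k *
      (∑ l ∈ range (k+1), (-1:ℝ)^l * ((k.choose l : ℝ) + (k.choose (l+1) : ℝ)) * fall (lam * (l+1)) n) := by
    rw [Tb, Finset.sum_range_succ' (fun l => (-1 : ℝ) ^ l * ((k+1).choose l : ℝ) * fall (lam * l) n) (k+1)]
    simp only [Nat.cast_zero, mul_zero, fall_zero_left hn, Nat.choose_succ_succ, Nat.cast_add,
      add_zero]
    rw [Finset.mul_sum, Finset.mul_sum]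
    apply Finset.sum_congr rfl; intro l hl; push_cast; ring
  -- step 2: second part equals -Tb lam n k
  have step2 : (-1:ℝ)^k * (∑ l ∈ range (k+1), (-1:ℝ)^l * (k.choose (l+1) : ℝ) * fall (lam * (l+1)) n)
      = - Tb lam n k := by
    have e : ∑ l ∈ range (k+2), (-1:ℝ)^l * (k.choose l : ℝ) * fall (lam * l) n
        = ∑ l ∈ range (k+1), (-1:ℝ)^(l+1) * (k.choose (l+1) : ℝ) * fall (lam * (l+1)) n := by
      rw [Finset.sum_range_succ' (fun l => (-1 : ℝ) ^ l * (k.choose l : ℝ) * fall (lam * l) n) (k+1)]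
      simp [fall_zero_left hn]
    have e2 : ∑ l ∈ range (k+2), (-1:ℝ)^l * (k.choose l : ℝ) * fall (lam * l) n
        = ∑ l ∈ range (k+1), (-1:ℝ)^l * (k.choose l : ℝ) * fall (lam * l) n := by
      rw [Finset.sum_range_succ]
      simp
    rw [Tb, ← e2, e, Finset.mul_sum, Finset.mul_sum, ← Finset.sum_neg_distrib]
    apply Finset.sum_congr rfl; intro l hl; ring
  -- step 3: Vandermonde expansion of the first part
  have hv : ∀ l : ℕ, fall (lam * ((l:ℝ) + 1)) n
      = ∑ i ∈ range (n+1), (n.choose i : ℝ) * fall lam i * fall (lam * l) (n - i) := by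
    intro l
    have h : lam * ((l:ℝ) + 1) = lam + lam * l := by ring
    rw [h, fall_vandermonde]
  have inner : ∀ i ∈ range (n+1), (n.choose i : ℝ) * fall lam i * Tb lam (n - i) k
      = ∑ l ∈ range (k+1), (-1:ℝ)^k * ((-1:ℝ)^l * (k.choose l:ℝ)
          * ((n.choose i : ℝ) * fall lam i * fall (lam * l) (n-i))) := by
    intro i _
    rw [Tb, Finset.mul_sum, Finset.mul_sum]
    apply Finset.sum_congr rfl; intro l _; ring
  have outer : ∀ l ∈ range (k+1), (-1:ℝ)^k * ((-1:ℝ)^l * (k.choose l:ℝ) * fall (lam * ((l:ℝ)+1)) n)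
      = ∑ i ∈ range (n+1), (-1:ℝ)^k * ((-1:ℝ)^l * (k.choose l:ℝ)
          * ((n.choose i:ℝ) * fall lam i * fall (lam*l) (n-i))) := by
    intro l _
    rw [hv l, Finset.mul_sum, Finset.mul_sum]
  have step3 : (-1:ℝ)^k * (∑ l ∈ range (k+1), (-1:ℝ)^l * (k.choose l:ℝ) * fall (lam * ((l:ℝ)+1)) n)
      = (∑ i ∈ range n, (n.choose (i+1) : ℝ) * fall lam (i+1) * Tb lam (n - (i+1)) k)
        + Tb lam n k := by
    calc (-1:ℝ)^k * (∑ l ∈ range (k+1), (-1:ℝ)^l * (k.choose l:ℝ) * fall (lam * ((l:ℝ)+1)) n)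
        = ∑ l ∈ range (k+1), (-1:ℝ)^k * ((-1:ℝ)^l * (k.choose l:ℝ) * fall (lam * ((l:ℝ)+1)) n) := by
          rw [Finset.mul_sum]
      _ = ∑ l ∈ range (k+1), ∑ i ∈ range (n+1), (-1:ℝ)^k * ((-1:ℝ)^l * (k.choose l:ℝ)
            * ((n.choose i:ℝ) * fall lam i * fall (lam*l) (n-i))) := Finset.sum_congr rfl outer
      _ = ∑ i ∈ range (n+1), ∑ l ∈ range (k+1), (-1:ℝ)^k * ((-1:ℝ)^l * (k.choose l:ℝ)
            * ((n.choose i:ℝ) * fall lam i * fall (lam*l) (n-i))) := Finset.sum_comm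
      _ = ∑ i ∈ range (n+1), (n.choose i : ℝ) * fall lam i * Tb lam (n - i) k :=
          (Finset.sum_congr rfl inner).symm
      _ = (∑ i ∈ range n, (n.choose (i+1) : ℝ) * fall lam (i+1) * Tb lam (n - (i+1)) k)
            + Tb lam n k := by
          rw [Finset.sum_range_succ' (fun i => (n.choose i : ℝ) * fall lam i * Tb lam (n - i) k) n]
          simp [fall_zero]
  -- assemble
  have split : (-1:ℝ)^k * (∑ l ∈ range (k+1), (-1:ℝ)^l * (k.choose l:ℝ) * fall (lam * ((l:ℝ)+1)) n)
      + (-1:ℝ)^k * (∑ l ∈ range (k+1), (-1:ℝ)^l * (k.choose (l+1):ℝ) * fall (lam * ((l:ℝ)+1)) n)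
      = (-1:ℝ)^k * ∑ l ∈ range (k+1), (-1:ℝ)^l * ((k.choose l : ℝ) + (k.choose (l+1) : ℝ))
          * fall (lam * ((l:ℝ)+1)) n := by
    rw [← mul_add, ← Finset.sum_add_distrib]
    congr 1
    apply Finset.sum_congr rfl; intro l _; ring
  rw [step1, ← split, step2, step3]
  ring

lemma Tb_vanish (lam : ℝ) : ∀ k m, m < k → Tb lam m k = 0 := by
  intro k
  induction k with
  | zero => omega
  | succ k ih =>
    intro m hm
    rcases Nat.eq_zero_or_pos m with h0 | h1
    · subst h0; exact Tb_zero_left lam (by omega)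
    · rw [Tb_rec lam m k h1]
      apply Finset.sum_eq_zero; intro i hi
      have hi' : i < m := Finset.mem_range.mp hi
      rw [ih (m - (i+1)) (by omega), mul_zero]


lemma restrict_sum {m n : ℕ} (hmn : m ≤ n) (l : Fin m → ℕ) (g : ℕ → ℕ → ℕ)
    (hg : ∀ i, g i 0 = 0) :
    ∑ i : Fin n, g i.1 (if h : i.1 < m then l ⟨i.1, h⟩ else 0) = ∑ i : Fin m, g i.1 (l i) := by
  set L : ℕ → ℕ := fun j => if h : j < m then l ⟨j, h⟩ else 0 with hL
  have e1 : ∑ i : Fin n, g i.1 (L i.1) = ∑ i ∈ range n, g i (L i) :=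
    Fin.sum_univ_eq_sum_range (fun i => g i (L i)) n
  have e2 : ∑ i ∈ range m, g i (L i) = ∑ i ∈ range n, g i (L i) := by
    apply Finset.sum_subset (Finset.range_subset_range.2 hmn)
    intro j _ hj
    have : ¬ j < m := by simpa using hj
    simp [hL, dif_neg this, hg]
  have e3 : ∑ i ∈ range m, g i (L i) = ∑ i : Fin m, g i.1 (L i.1) :=
    (Fin.sum_univ_eq_sum_range (fun i => g i (L i)) m).symm
  have e4 : ∀ i : Fin m, L i.1 = l i := by
    intro i; simp [hL, dif_pos i.2]
  calc ∑ i : Fin n, g i.1 (L i.1) = ∑ i ∈ range n, g i (L i) := e1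
    _ = ∑ i ∈ range m, g i (L i) := e2.symm
    _ = ∑ i : Fin m, g i.1 (L i.1) := e3
    _ = ∑ i : Fin m, g i.1 (l i) := by apply Finset.sum_congr rfl; intro i _; rw [e4 i]

lemma restrict_prod {M : Type*} [CommMonoid M] {m n : ℕ} (hmn : m ≤ n) (l : Fin m → ℕ)
    (g : ℕ → ℕ → M) (hg : ∀ i, g i 0 = 1) :
    ∏ i : Fin n, g i.1 (if h : i.1 < m then l ⟨i.1, h⟩ else 0) = ∏ i : Fin m, g i.1 (l i) := by
  set L : ℕ → ℕ := fun j => if h : j < m then l ⟨j, h⟩ else 0 with hL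
  have e1 : ∏ i : Fin n, g i.1 (L i.1) = ∏ i ∈ range n, g i (L i) :=
    Fin.prod_univ_eq_prod_range (fun i => g i (L i)) n
  have e2 : ∏ i ∈ range m, g i (L i) = ∏ i ∈ range n, g i (L i) := by
    apply Finset.prod_subset (Finset.range_subset_range.2 hmn)
    intro j _ hj
    have : ¬ j < m := by simpa using hj
    simp [hL, dif_neg this, hg]
  have e3 : ∏ i ∈ range m, g i (L i) = ∏ i : Fin m, g i.1 (L i.1) :=
    (Fin.prod_univ_eq_prod_range (fun i => g i (L i)) m).symm
  have e4 : ∀ i : Fin m, L i.1 = l i := by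
    intro i; simp [hL, dif_pos i.2]
  calc ∏ i : Fin n, g i.1 (L i.1) = ∏ i ∈ range n, g i (L i) := e1
    _ = ∏ i ∈ range m, g i (L i) := e2.symm
    _ = ∏ i : Fin m, g i.1 (L i.1) := e3
    _ = ∏ i : Fin m, g i.1 (l i) := by apply Finset.prod_congr rfl; intro i _; rw [e4 i]

/-- Restriction lemma: `bellPoly m k` can be computed as a sum over vectors on `Fin n` for `m ≤ n`. -/
lemma bellPoly_restrict (x : ℕ → ℝ) {m n k : ℕ} (hmn : m ≤ n) :
    bellPoly m k x =
      ∑ l ∈ (Fintype.piFinset fun _ : Fin n => Finset.range (n + 1)).filter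
          (fun l => (∑ i, (i.1 + 1) * l i) = m ∧ (∑ i, l i) = k),
        (m.factorial : ℝ) / (∏ i, ((l i).factorial : ℝ)) *
          ∏ i, (x (i.1 + 1) / ((i.1 + 1).factorial : ℝ)) ^ (l i) := by
  rw [bellPoly]
  refine Finset.sum_nbij' (fun l (j : Fin n) => if h : j.1 < m then l ⟨j.1, h⟩ else 0)
    (fun l (j : Fin m) => l (Fin.castLE hmn j)) ?_ ?_ ?_ ?_ ?_
  · -- forward membership
    intro l hl
    rw [Finset.mem_filter] at hl ⊢
    obtain ⟨hpi, h1, h2⟩ := hl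
    rw [Fintype.mem_piFinset] at hpi
    refine ⟨?_, ?_, ?_⟩
    · rw [Fintype.mem_piFinset]
      intro j
      rw [Finset.mem_range]
      show (if h : j.1 < m then l ⟨j.1, h⟩ else 0) < n + 1
      split
      · next h => exact lt_of_lt_of_le (Finset.mem_range.mp (hpi _)) (by omega)
      · omega
    · rw [restrict_sum hmn l (fun i v => (i+1) * v) (fun i => by simp)]; exact h1
    · rw [restrict_sum hmn l (fun i v => v) (fun i => rfl)]; exact h2
  · -- backward membership
    intro l hl
    rw [Finset.mem_filter] at hl
    obtain ⟨hpi, h1, h2⟩ := hl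
    rw [Fintype.mem_piFinset] at hpi
    have hbound : ∀ j : Fin n, (j.1 + 1) * l j ≤ m := by
      intro j
      rw [← h1]
      exact Finset.single_le_sum (f := fun i : Fin n => (i.1 + 1) * l i)
        (fun i _ => Nat.zero_le _) (Finset.mem_univ j)
    have hzero : ∀ j : Fin n, m ≤ j.1 → l j = 0 := by
      intro j hj
      by_contra h0
      have : j.1 + 1 ≤ (j.1 + 1) * l j := Nat.le_mul_of_pos_right _ (by omega)
      have := hbound j
      omega
    have hext : ∀ j : Fin n, (if h : j.1 < m then l (Fin.castLE hmn ⟨j.1, h⟩) else 0) = l j := by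
      intro j
      split
      · next h => exact congrArg l (Fin.ext rfl)
      · next h => exact (hzero j (by omega)).symm
    rw [Finset.mem_filter]
    refine ⟨?_, ?_, ?_⟩
    · rw [Fintype.mem_piFinset]
      intro j
      rw [Finset.mem_range]
      have hb := hbound (Fin.castLE hmn j)
      have h2 : l (Fin.castLE hmn j) ≤ ((Fin.castLE hmn j).1 + 1) * l (Fin.castLE hmn j) :=
        Nat.le_mul_of_pos_left _ (Nat.succ_pos _)
      exact Nat.lt_succ_of_le (le_trans h2 hb)
    · rw [← restrict_sum hmn (fun j => l (Fin.castLE hmn j)) (fun i v => (i+1) * v) (fun i => by simp)]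
      exact (Finset.sum_congr rfl fun j _ => by rw [hext j]).trans h1
    · rw [← restrict_sum hmn (fun j => l (Fin.castLE hmn j)) (fun i v => v) (fun i => rfl)]
      exact (Finset.sum_congr rfl fun j _ => hext j).trans h2
  · -- left inverse
    intro l _
    funext j
    simp [j.2]
  · -- right inverse
    intro l hl
    rw [Finset.mem_filter] at hl
    obtain ⟨hpi, h1, h2⟩ := hl
    have hbound : ∀ j : Fin n, (j.1 + 1) * l j ≤ m := by
      intro j
      rw [← h1]
      exact Finset.single_le_sum (f := fun i : Fin n => (i.1 + 1) * l i)
        (fun i _ => Nat.zero_le _) (Finset.mem_univ j)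
    have hzero : ∀ j : Fin n, m ≤ j.1 → l j = 0 := by
      intro j hj
      by_contra h0
      have : j.1 + 1 ≤ (j.1 + 1) * l j := Nat.le_mul_of_pos_right _ (by omega)
      have := hbound j
      omega
    funext j
    show (if h : j.1 < m then l (Fin.castLE hmn ⟨j.1, h⟩) else 0) = l j
    split
    · next h => exact congrArg l (Fin.ext rfl)
    · next h => exact (hzero j (by omega)).symm
  · -- term equality
    intro l _
    rw [restrict_prod hmn l (fun i v => ((v.factorial : ℕ) : ℝ)) (fun i => by simp),
        restrict_prod hmn l (fun i v => (x (i + 1) / ((i + 1).factorial : ℝ)) ^ v) (fun i => by simp)]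

lemma bellPoly_zero_zero (x : ℕ → ℝ) : bellPoly 0 0 x = 1 := by
  rw [bellPoly]
  rw [show (Fintype.piFinset fun _ : Fin 0 => Finset.range (0 + 1)).filter
      (fun l => (∑ i, (i.1 + 1) * l i) = 0 ∧ (∑ i, l i) = 0) = {fun _ => 0} from by
    apply Finset.eq_singleton_iff_unique_mem.mpr
    constructor
    · simp
      exact Subsingleton.elim _ _
    · intro l _; funext j; exact absurd j.2 (Nat.not_lt_zero _)]
  simp

lemma bellPoly_zero_left (x : ℕ → ℝ) {k : ℕ} (hk : 1 ≤ k) : bellPoly 0 k x = 0 := by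
  rw [bellPoly]
  rw [Finset.filter_eq_empty_iff.mpr]
  · simp
  · intro l _
    simp only [Finset.univ_eq_empty, Finset.sum_empty]
    rintro ⟨-, h⟩
    omega

lemma bellPoly_zero_right (x : ℕ → ℝ) {n : ℕ} (hn : 1 ≤ n) : bellPoly n 0 x = 0 := by
  rw [bellPoly]
  rw [Finset.filter_eq_empty_iff.mpr]
  · simp
  · intro l _
    rintro ⟨h1, h2⟩
    have hz : ∀ i ∈ Finset.univ, l i = 0 := (Finset.sum_eq_zero_iff).mp h2
    rw [Finset.sum_congr rfl (fun i hi => by rw [hz i hi, Nat.mul_zero])] at h1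
    simp at h1
    omega

lemma sum_update_helper {n : ℕ} (g : Fin n → ℕ → ℕ) (l : Fin n → ℕ) (i : Fin n) (v : ℕ) :
    (∑ j, g j (Function.update l i v j)) + g i (l i) = (∑ j, g j (l j)) + g i v := by
  have h1 : ∑ j, g j (Function.update l i v j)
      = ∑ j, Function.update (fun k => g k (l k)) i (g i v) j :=
    Finset.sum_congr rfl (fun j _ => Function.apply_update (fun k t => g k t) l i v j)
  rw [h1, Finset.sum_update_of_mem (Finset.mem_univ i),
    ← Finset.add_sum_erase _ _ (Finset.mem_univ i), Finset.sdiff_singleton_eq_erase]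
  ring

lemma bellPoly_rec (x : ℕ → ℝ) (n k : ℕ) :
    ((k : ℝ) + 1) * bellPoly n (k + 1) x
      = ∑ i ∈ range n, (n.choose (i+1) : ℝ) * x (i+1) * bellPoly (n - (i+1)) k x := by
  have stepA : ((k : ℝ) + 1) * bellPoly n (k + 1) x
      = ∑ l ∈ (Fintype.piFinset fun _ : Fin n => Finset.range (n + 1)).filter
            (fun l => (∑ i, (i.1 + 1) * l i) = n ∧ (∑ i, l i) = k + 1),
          ∑ i : Fin n, (l i : ℝ) * ((n.factorial : ℝ) / (∏ j, ((l j).factorial : ℝ)) *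
            ∏ j, (x (j.1 + 1) / ((j.1 + 1).factorial : ℝ)) ^ (l j)) := by
    rw [bellPoly, Finset.mul_sum]
    apply Finset.sum_congr rfl
    intro l hl
    have h2 : (∑ i, l i) = k + 1 := ((Finset.mem_filter.mp hl).2).2
    rw [← Finset.sum_mul]
    congr 1
    rw [← Nat.cast_sum, h2]
    push_cast
    ring
  have stepC : ∀ i : Fin n,
      (∑ l ∈ (Fintype.piFinset fun _ : Fin n => Finset.range (n + 1)).filter
            (fun l => (∑ i, (i.1 + 1) * l i) = n ∧ (∑ i, l i) = k + 1),
          (l i : ℝ) * ((n.factorial : ℝ) / (∏ j, ((l j).factorial : ℝ)) *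
            ∏ j, (x (j.1 + 1) / ((j.1 + 1).factorial : ℝ)) ^ (l j)))
      = (n.choose (i.1 + 1) : ℝ) * x (i.1 + 1) * bellPoly (n - (i.1 + 1)) k x := by
    intro i
    have him : i.1 + 1 ≤ n := i.2
    -- restrict to l i ≠ 0
    rw [← Finset.sum_filter_of_ne (p := fun l : Fin n → ℕ => l i ≠ 0)
      (fun l _ hne h0 => hne (by rw [h0]; simp))]
    -- bijection with the (n - (i+1), k) index set
    have c2 : (∑ l ∈ ((Fintype.piFinset fun _ : Fin n => Finset.range (n + 1)).filter
            (fun l => (∑ i, (i.1 + 1) * l i) = n ∧ (∑ i, l i) = k + 1)).filter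
            (fun l => l i ≠ 0),
          (l i : ℝ) * ((n.factorial : ℝ) / (∏ j, ((l j).factorial : ℝ)) *
            ∏ j, (x (j.1 + 1) / ((j.1 + 1).factorial : ℝ)) ^ (l j)))
        = ∑ l ∈ (Fintype.piFinset fun _ : Fin n => Finset.range (n + 1)).filter
            (fun l => (∑ j, (j.1 + 1) * l j) = n - (i.1 + 1) ∧ (∑ j, l j) = k),
          (x (i.1 + 1) / ((i.1 + 1).factorial : ℝ)) *
            ((n.factorial : ℝ) / (((n - (i.1 + 1)).factorial : ℝ))) *
            (((n - (i.1 + 1)).factorial : ℝ) / (∏ j, ((l j).factorial : ℝ)) *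
              ∏ j, (x (j.1 + 1) / ((j.1 + 1).factorial : ℝ)) ^ (l j)) := by
      refine Finset.sum_nbij' (fun l => Function.update l i (l i - 1))
        (fun l => Function.update l i (l i + 1)) ?_ ?_ ?_ ?_ ?_
      · -- forward membership
        intro l hl
        rw [Finset.mem_filter] at hl
        obtain ⟨hl, hne⟩ := hl
        rw [Finset.mem_filter] at hl
        obtain ⟨hpi, h1, h2⟩ := hl
        rw [Fintype.mem_piFinset] at hpi
        rw [Finset.mem_filter]
        refine ⟨?_, ?_, ?_⟩
        · rw [Fintype.mem_piFinset]
          intro j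
          rw [Finset.mem_range]
          rw [Function.update_apply]
          have := Finset.mem_range.mp (hpi j)
          have := Finset.mem_range.mp (hpi i)
          split <;> omega
        · have key := sum_update_helper (fun j t => (j.1 + 1) * t) l i (l i - 1)
          rw [h1] at key
          have e2 : (i.1 + 1) * (l i) = (i.1 + 1) * (l i - 1) + (i.1 + 1) := by
            conv_lhs => rw [show l i = (l i - 1) + 1 by omega]
            rw [Nat.mul_succ]
          rw [e2] at key
          set A := ∑ j, (j.1 + 1) * Function.update l i (l i - 1) j with hA
          set C := (i.1 + 1) * (l i - 1) with hC
          omega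
        · have key := sum_update_helper (fun _ t => t) l i (l i - 1)
          rw [h2] at key
          omega
      · -- backward membership
        intro l hl
        rw [Finset.mem_filter] at hl
        obtain ⟨hpi, h1, h2⟩ := hl
        rw [Fintype.mem_piFinset] at hpi
        have hb : (i.1 + 1) * l i ≤ n - (i.1 + 1) := by
          rw [← h1]
          exact Finset.single_le_sum (f := fun j : Fin n => (j.1 + 1) * l j)
            (fun j _ => Nat.zero_le _) (Finset.mem_univ i)
        have hb2 : l i ≤ (i.1 + 1) * l i := Nat.le_mul_of_pos_left _ (Nat.succ_pos _)
        rw [Finset.mem_filter, Finset.mem_filter]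
        refine ⟨⟨?_, ?_, ?_⟩, ?_⟩
        · rw [Fintype.mem_piFinset]
          intro j
          rw [Finset.mem_range]
          rw [Function.update_apply]
          have := Finset.mem_range.mp (hpi j)
          set P := (i.1 + 1) * l i with hP
          split <;> omega
        · have key := sum_update_helper (fun j t => (j.1 + 1) * t) l i (l i + 1)
          rw [h1] at key
          have e2 : (i.1 + 1) * (l i + 1) = (i.1 + 1) * l i + (i.1 + 1) := Nat.mul_succ _ _
          rw [e2] at key
          set A := ∑ j, (j.1 + 1) * Function.update l i (l i + 1) j with hA
          set P := (i.1 + 1) * l i with hP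
          omega
        · have key := sum_update_helper (fun _ t => t) l i (l i + 1)
          rw [h2] at key
          omega
        · simp [Function.update_self]
      · -- left inverse
        intro l hl
        rw [Finset.mem_filter] at hl
        have hne : l i ≠ 0 := hl.2
        funext j
        rcases eq_or_ne j i with rfl | hji
        · simp [Function.update_self]
          omega
        · simp [Function.update_apply, hji]
      · -- right inverse
        intro l _
        funext j
        rcases eq_or_ne j i with rfl | hji
        · simp [Function.update_self]
        · simp [Function.update_apply, hji]
      · -- term equality
        intro l hl
        rw [Finset.mem_filter] at hl
        obtain ⟨hl, hne⟩ := hl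
        rw [Finset.mem_filter] at hl
        obtain ⟨hpi, h1, h2⟩ := hl
        have hP : (∏ j, ((l j).factorial : ℝ))
            = ((l i).factorial : ℝ) * ∏ j ∈ Finset.univ.erase i, ((l j).factorial : ℝ) :=
          (Finset.mul_prod_erase _ _ (Finset.mem_univ i)).symm
        have hP' : (∏ j, (((Function.update l i (l i - 1)) j).factorial : ℝ))
            = (((l i) - 1).factorial : ℝ) * ∏ j ∈ Finset.univ.erase i, ((l j).factorial : ℝ) := by
          rw [← Finset.mul_prod_erase _ _ (Finset.mem_univ i)]
          congr 1
          · rw [Function.update_self]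
          · apply Finset.prod_congr rfl
            intro j hj
            rw [Function.update_of_ne (Finset.ne_of_mem_erase hj)]
        have hQ : (∏ j, (x (j.1 + 1) / ((j.1 + 1).factorial : ℝ)) ^ (l j))
            = (x (i.1 + 1) / ((i.1 + 1).factorial : ℝ)) ^ (l i) *
              ∏ j ∈ Finset.univ.erase i, (x (j.1 + 1) / ((j.1 + 1).factorial : ℝ)) ^ (l j) :=
          (Finset.mul_prod_erase _ _ (Finset.mem_univ i)).symm
        have hQ' : (∏ j, (x (j.1 + 1) / ((j.1 + 1).factorial : ℝ)) ^ ((Function.update l i (l i - 1)) j))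
            = (x (i.1 + 1) / ((i.1 + 1).factorial : ℝ)) ^ (l i - 1) *
              ∏ j ∈ Finset.univ.erase i, (x (j.1 + 1) / ((j.1 + 1).factorial : ℝ)) ^ (l j) := by
          rw [← Finset.mul_prod_erase _ _ (Finset.mem_univ i)]
          congr 1
          · rw [Function.update_self]
          · apply Finset.prod_congr rfl
            intro j hj
            rw [Function.update_of_ne (Finset.ne_of_mem_erase hj)]
        rw [hP, hP', hQ, hQ']
        have hfact : ((l i).factorial : ℝ) = (l i : ℝ) * (((l i) - 1).factorial : ℝ) := by
          have hpos : 1 ≤ l i := Nat.pos_of_ne_zero hne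
          have h : l i - 1 + 1 = l i := by omega
          have h1 : ((l i - 1 : ℕ) : ℝ) = (l i : ℝ) - 1 := by
            push_cast [Nat.cast_sub hpos]; ring
          conv_lhs => rw [← h]
          rw [Nat.factorial_succ]
          push_cast
          rw [h1]
          ring
        have hpow : (x (i.1 + 1) / ((i.1 + 1).factorial : ℝ)) ^ (l i)
            = (x (i.1 + 1) / ((i.1 + 1).factorial : ℝ)) ^ (l i - 1) *
              (x (i.1 + 1) / ((i.1 + 1).factorial : ℝ)) := by
          conv_lhs => rw [show l i = (l i - 1) + 1 by omega]
          rw [pow_succ]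
        rw [hfact, hpow]
        have hli : (l i : ℝ) ≠ 0 := Nat.cast_ne_zero.mpr hne
        have hf1 : (((l i) - 1).factorial : ℝ) ≠ 0 := Nat.cast_ne_zero.mpr (Nat.factorial_ne_zero _)
        have hf2 : (((n - (i.1+1))).factorial : ℝ) ≠ 0 := Nat.cast_ne_zero.mpr (Nat.factorial_ne_zero _)
        have hf3 : (((i.1+1)).factorial : ℝ) ≠ 0 := Nat.cast_ne_zero.mpr (Nat.factorial_ne_zero _)
        have hPP : (∏ j ∈ Finset.univ.erase i, ((l j).factorial : ℝ)) ≠ 0 := by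
          apply Finset.prod_ne_zero_iff.mpr
          intro j _
          exact Nat.cast_ne_zero.mpr (Nat.factorial_ne_zero _)
        field_simp
    rw [c2, ← Finset.mul_sum, ← bellPoly_restrict x (show n - (i.1+1) ≤ n by omega)]
    have hchoose := Nat.choose_mul_factorial_mul_factorial him
    have hc : ((n.choose (i.1+1) : ℕ) : ℝ) * ((i.1+1).factorial : ℝ) * (((n - (i.1+1)).factorial : ℝ))
        = (n.factorial : ℝ) := by exact_mod_cast congrArg (Nat.cast (R := ℝ)) hchoose
    have hf2 : (((n - (i.1+1))).factorial : ℝ) ≠ 0 := Nat.cast_ne_zero.mpr (Nat.factorial_ne_zero _)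
    have hf3 : (((i.1+1)).factorial : ℝ) ≠ 0 := Nat.cast_ne_zero.mpr (Nat.factorial_ne_zero _)
    congr 1
    field_simp
    linear_combination (-(x (i.1+1))) * hc
  rw [stepA, Finset.sum_comm]
  rw [Finset.sum_congr rfl (fun i _ => stepC i)]
  exact Fin.sum_univ_eq_sum_range (fun i => (n.choose (i+1) : ℝ) * x (i+1) * bellPoly (n-(i+1)) k x) n

lemma main_identity (lam : ℝ) : ∀ k n, (k.factorial : ℝ) * bellPoly n k (fun i => fall lam i) = Tb lam n k := by
  intro k
  induction k with
  | zero =>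
    intro n
    rcases Nat.eq_zero_or_pos n with rfl | hn
    · rw [bellPoly_zero_zero, Tb_zero_right, fall_zero]
      simp
    · rw [bellPoly_zero_right _ hn, Tb_zero_right, fall_zero_left hn]
      simp
  | succ k ih =>
    intro n
    rcases Nat.eq_zero_or_pos n with rfl | hn
    · rw [bellPoly_zero_left _ (by omega), Tb_zero_left lam (by omega)]
      simp
    · have hrec := bellPoly_rec (fun i => fall lam i) n k
      have hstep : ((k+1).factorial : ℝ) * bellPoly n (k+1) (fun i => fall lam i)
          = (k.factorial : ℝ) * (((k:ℝ)+1) * bellPoly n (k+1) (fun i => fall lam i)) := by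
        rw [Nat.factorial_succ]
        push_cast
        ring
      rw [hstep, hrec, Finset.mul_sum, Tb_rec lam n k hn]
      apply Finset.sum_congr rfl
      intro i _
      rw [← ih (n - (i+1))]
      ring

theorem bellPoly_fallingFactorial (n k : ℕ) (hk : 1 ≤ k) (hkn : k ≤ n) (lam : ℝ) :
    bellPoly n k (fun i => fall lam i) =
      (-1 : ℝ) ^ k / k.factorial *
        ∑ l ∈ Finset.range (k + 1), (-1 : ℝ) ^ l * (k.choose l : ℝ) * fall (lam * l) n := by
  have h := main_identity lam k n
  rw [Tb] at h
  have hk0 : (k.factorial : ℝ) ≠ 0 := Nat.cast_ne_zero.mpr (Nat.factorial_ne_zero _)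
  field_simp
  linear_combination h
end

section
/- For integers n ≥ k ≥ 1 and any scalar λ, the Bell polynomial of the second kind satisfies B_{n,k}(⟨λ⟩₁, ⟨λ⟩₂, ..., ⟨λ⟩_{n-k+1}) = (-1)^k · λ · ((n−1)!/k!) · Σ_{l=1}^{k} (-1)^l · l · C(k,l) · C(λl−1, n−1), where C(z,w) denotes the generalized binomial coefficient. -/
open Finset Polynomial

/-- The generalized binomial coefficient `C(z, m) = z(z-1)⋯(z-m+1)/m!`. -/
noncomputable def genBinom (z : ℝ) (m : ℕ) : ℝ :=
  (∏ j ∈ Finset.range m, (z - j)) / m.factorial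

lemma fall_eq_smeval (x : ℝ) (m : ℕ) : fall x m = (descPochhammer ℤ m).smeval x := by
  induction m with
  | zero => simp [fall]
  | succ m ih =>
    rw [descPochhammer_succ_right, smeval_mul, ← ih]
    have : fall x (m + 1) = fall x m * (x - m) := Finset.prod_range_succ _ m
    rw [this, smeval_sub, smeval_X, smeval_natCast]
    norm_num

lemma fall_add (x y : ℝ) (m : ℕ) : fall (x + y) m =
    ∑ ij ∈ antidiagonal m, (m.choose ij.1 : ℝ) * (fall x ij.1 * fall y ij.2) := by
  rw [fall_eq_smeval, Ring.descPochhammer_smeval_add m (Commute.all x y)]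
  simp [fall_eq_smeval]

lemma genBinom_eq (z : ℝ) (m : ℕ) : genBinom z m = fall z m / m.factorial := rfl

lemma genBinom_add (x y : ℝ) (m : ℕ) : genBinom (x + y) m =
    ∑ ij ∈ antidiagonal m, genBinom x ij.1 * genBinom y ij.2 := by
  rw [genBinom_eq, fall_add, Finset.sum_div]
  refine Finset.sum_congr rfl fun ij hij => ?_
  have h := Finset.HasAntidiagonal.mem_antidiagonal.mp hij
  have hfac : (ij.1.factorial : ℝ) * ij.2.factorial ≠ 0 := by
    positivity
  have hm : (m.choose ij.1 : ℝ) = m.factorial / (ij.1.factorial * ij.2.factorial) := by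
    rw [eq_div_iff hfac]
    have h1 : ij.1 ≤ m := h ▸ Nat.le_add_right _ _
    have := Nat.choose_mul_factorial_mul_factorial h1
    have h2 : m - ij.1 = ij.2 := by omega
    rw [h2] at this
    push_cast [← this]
    ring
  rw [genBinom_eq, genBinom_eq, hm]
  have : (m.factorial : ℝ) ≠ 0 := by positivity
  field_simp

lemma genBinom_zero_left (m : ℕ) : genBinom 0 m = if m = 0 then 1 else 0 := by
  cases m with
  | zero => simp [genBinom]
  | succ m =>
    simp only [genBinom, Nat.succ_ne_zero, if_false]
    rw [Finset.prod_eq_zero (Finset.mem_range.mpr (Nat.succ_pos m)) (by norm_num)]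
    simp

noncomputable def Gp (lam : ℝ) (n : ℕ) : Polynomial ℝ :=
  ∑ m ∈ Finset.range (n + 1), Polynomial.C (genBinom lam m) * Polynomial.X ^ m

lemma coeff_Gp (lam : ℝ) (n a : ℕ) (ha : a ≤ n) : (Gp lam n).coeff a = genBinom lam a := by
  rw [Gp]
  rw [Polynomial.finset_sum_coeff]
  simp only [Polynomial.coeff_C_mul, Polynomial.coeff_X_pow, mul_ite, mul_one, mul_zero]
  rw [Finset.sum_ite_eq (Finset.range (n+1)) a (fun m => genBinom lam m)]
  simp [Nat.lt_succ_of_le ha]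

lemma coeff_Gp_pow (lam : ℝ) (n : ℕ) (l : ℕ) :
    ∀ m ≤ n, ((Gp lam n) ^ l).coeff m = genBinom (lam * l) m := by
  induction l with
  | zero =>
    intro m hm
    simp [Polynomial.coeff_one, genBinom_zero_left, eq_comm]
  | succ l ih =>
    intro m hm
    rw [pow_succ', Polynomial.coeff_mul]
    have : ∀ ij ∈ antidiagonal m, (Gp lam n).coeff ij.1 * ((Gp lam n)^l).coeff ij.2
        = genBinom lam ij.1 * genBinom (lam * l) ij.2 := by
      intro ij hij
      have h := Finset.HasAntidiagonal.mem_antidiagonal.mp hij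
      rw [coeff_Gp lam n ij.1 (by omega), ih ij.2 (by omega)]
    rw [Finset.sum_congr rfl this, ← genBinom_add]
    congr 1
    push_cast
    ring

noncomputable def gp (lam : ℝ) (n : ℕ) : Polynomial ℝ :=
  ∑ i : Fin n, Polynomial.C (genBinom lam (i.1 + 1)) * Polynomial.X ^ (i.1 + 1)

lemma Gp_eq_one_add_gp (lam : ℝ) (n : ℕ) : Gp lam n = 1 + gp lam n := by
  rw [Gp, Finset.sum_range_succ']
  have h0 : genBinom lam 0 = 1 := by simp [genBinom]
  rw [h0]
  simp only [pow_zero, mul_one, Polynomial.C_1]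
  rw [add_comm, gp, Fin.sum_univ_eq_sum_range (fun i => Polynomial.C (genBinom lam (i + 1)) * Polynomial.X ^ (i + 1)) n]

lemma bellPoly_eq_coeff (lam : ℝ) (n k : ℕ) (hn : 1 ≤ n) :
    bellPoly n k (fun i => fall lam i) =
      (n.factorial : ℝ) / (k.factorial : ℝ) * ((gp lam n) ^ k).coeff n := by
  rw [gp, Finset.sum_pow_eq_sum_piAntidiag]
  have hterm : ∀ l : Fin n → ℕ,
      (∏ i, (Polynomial.C (genBinom lam (i.1 + 1)) * Polynomial.X ^ (i.1 + 1)) ^ (l i))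
      = Polynomial.C (∏ i, (genBinom lam (i.1 + 1)) ^ (l i)) *
          Polynomial.X ^ (∑ i, (i.1 + 1) * l i) := by
    intro l
    have step : ∀ i : Fin n, (Polynomial.C (genBinom lam (i.1 + 1)) * Polynomial.X ^ (i.1 + 1)) ^ (l i)
        = Polynomial.C ((genBinom lam (i.1 + 1)) ^ (l i)) * Polynomial.X ^ ((i.1 + 1) * l i) := by
      intro i
      rw [mul_pow, ← Polynomial.C_pow, ← pow_mul]
    rw [Finset.prod_congr rfl (fun i _ => step i), Finset.prod_mul_distrib, ← map_prod,
      Finset.prod_pow_eq_pow_sum]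
  simp only [hterm]
  rw [Polynomial.finset_sum_coeff]
  simp only [Polynomial.coeff_natCast_mul, Polynomial.coeff_C_mul, Polynomial.coeff_X_pow,
    mul_ite, mul_one, mul_zero]
  rw [Finset.mul_sum]
  simp only [mul_ite, mul_zero]
  rw [← Finset.sum_filter]
  rw [bellPoly]
  refine Finset.sum_nbij' id id ?_ ?_ (fun _ _ => rfl) (fun _ _ => rfl) ?_
  · intro l hl
    simp only [Finset.mem_filter, Fintype.mem_piFinset, Finset.mem_range] at hl
    simp only [id_eq, Finset.mem_filter, Finset.mem_piAntidiag]
    exact ⟨⟨hl.2.2, fun i _ => Finset.mem_univ i⟩, hl.2.1.symm⟩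
  · intro l hl
    simp only [Finset.mem_filter, Finset.mem_piAntidiag] at hl
    simp only [id_eq, Finset.mem_filter, Fintype.mem_piFinset, Finset.mem_range]
    refine ⟨fun i => ?_, hl.2.symm, hl.1.1⟩
    have h1 : l i ≤ (i.1 + 1) * l i := Nat.le_mul_of_pos_left _ (Nat.succ_pos _)
    have h2 : (i.1 + 1) * l i ≤ ∑ j, (j.1 + 1) * l j :=
      Finset.single_le_sum (f := fun j : Fin n => (j.1 + 1) * l j) (fun j _ => Nat.zero_le _) (Finset.mem_univ i)
    omega
  · intro l hl
    simp only [Finset.mem_filter, Fintype.mem_piFinset, Finset.mem_range] at hl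
    obtain ⟨-, hsum, hcount⟩ := hl
    simp only [id]
    have hmult : (Nat.multinomial Finset.univ l : ℝ) =
        (k.factorial : ℝ) / ∏ i, ((l i).factorial : ℝ) := by
      have := Nat.multinomial_spec Finset.univ l
      rw [hcount] at this
      have hne : (∏ i, ((l i).factorial : ℝ)) ≠ 0 := by
        refine Finset.prod_ne_zero_iff.mpr fun i _ => ?_
        exact_mod_cast (Nat.factorial_ne_zero _)
      rw [eq_div_iff hne]
      exact_mod_cast congrArg (Nat.cast (R := ℝ)) ((mul_comm _ _).trans this)
    have hfall : ∀ i : Fin n, (fall lam (i.1 + 1) / ((i.1 + 1).factorial : ℝ)) ^ (l i)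
        = (genBinom lam (i.1 + 1)) ^ (l i) := fun i => rfl
    simp only [hfall, hmult]
    have hk : (k.factorial : ℝ) ≠ 0 := by exact_mod_cast Nat.factorial_ne_zero k
    field_simp

lemma genBinom_succ (z : ℝ) (m : ℕ) :
    genBinom z (m + 1) = z / (m + 1) * genBinom (z - 1) m := by
  have hfall : fall z (m + 1) = z * fall (z - 1) m := by
    rw [fall, Finset.prod_range_succ']
    simp only [Nat.cast_zero, sub_zero]
    rw [mul_comm, fall]
    congr 1
    refine Finset.prod_congr rfl fun j _ => ?_
    push_cast
    ring
  rw [genBinom_eq, genBinom_eq, hfall, Nat.factorial_succ]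
  have h1 : ((m + 1 : ℕ) : ℝ) ≠ 0 := by positivity
  have h2 : ((m.factorial : ℕ) : ℝ) ≠ 0 := by exact_mod_cast Nat.factorial_ne_zero m
  push_cast
  field_simp

theorem bellPoly_fallingFactorial_binom (n k : ℕ) (hk : 1 ≤ k) (hkn : k ≤ n) (lam : ℝ) :
    bellPoly n k (fun i => fall lam i) =
      (-1 : ℝ) ^ k * lam * ((n - 1).factorial : ℝ) / k.factorial *
        ∑ l ∈ Finset.Icc 1 k,
          (-1 : ℝ) ^ l * (l : ℝ) * (k.choose l : ℝ) * genBinom (lam * l - 1) (n - 1) := by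
  obtain ⟨m, rfl⟩ : ∃ m, n = m + 1 := ⟨n - 1, by omega⟩
  rw [bellPoly_eq_coeff lam (m + 1) k (by omega)]
  have hgp : gp lam (m + 1) = Gp lam (m + 1) - 1 := by
    rw [Gp_eq_one_add_gp]; ring
  rw [hgp, sub_pow, Polynomial.finset_sum_coeff]
  have hco : ∀ j ∈ Finset.range (k + 1),
      ((-1 : Polynomial ℝ) ^ (j + k) * (Gp lam (m+1)) ^ j * 1 ^ (k - j) * (k.choose j : Polynomial ℝ)).coeff (m+1)
      = (-1 : ℝ) ^ (j + k) * (k.choose j : ℝ) * genBinom (lam * j) (m + 1) := by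
    intro j hj
    rw [one_pow, mul_one]
    have : ((-1 : Polynomial ℝ) ^ (j + k) * (Gp lam (m+1)) ^ j * (k.choose j : Polynomial ℝ))
        = Polynomial.C ((-1:ℝ)^(j+k) * (k.choose j : ℝ)) * (Gp lam (m+1)) ^ j := by
      rw [show ((-1 : Polynomial ℝ)) = Polynomial.C (-1:ℝ) by simp,
        show ((k.choose j : Polynomial ℝ)) = Polynomial.C ((k.choose j : ℝ)) by simp,
        ← Polynomial.C_pow, Polynomial.C_mul]
      ring
    rw [this, Polynomial.coeff_C_mul, coeff_Gp_pow lam (m+1) j (m+1) le_rfl]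
  rw [Finset.sum_congr rfl hco]
  have hzero : (-1 : ℝ) ^ (0 + k) * ((k.choose 0 : ℕ) : ℝ) * genBinom (lam * ((0:ℕ):ℝ)) (m + 1) = 0 := by
    simp [genBinom_zero_left]
  rw [← Finset.sum_subset (by intro j hji; simp only [Finset.mem_Icc] at hji; simp only [Finset.mem_range]; omega : Finset.Icc 1 k ⊆ Finset.range (k+1))
    (by
      intro j hjr hji
      simp only [Finset.mem_range] at hjr
      simp only [Finset.mem_Icc] at hji
      have : j = 0 := by omega
      subst this
      exact hzero)]
  rw [Finset.mul_sum, Finset.mul_sum]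
  refine Finset.sum_congr rfl fun j hj => ?_
  simp only [Finset.mem_Icc] at hj
  have hsign : (-1 : ℝ) ^ (j + k) = (-1 : ℝ) ^ j * (-1 : ℝ) ^ k := by
    rw [pow_add]
  have hgb : genBinom (lam * j) (m + 1) = (lam * j) / (m + 1) * genBinom (lam * j - 1) m := by
    exact genBinom_succ (lam * j) m
  rw [hsign, hgb]
  have h1 : ((m + 1 : ℕ).factorial : ℝ) = (m + 1) * (m.factorial : ℝ) := by
    rw [Nat.factorial_succ]; push_cast; ring
  have h2 : (k.factorial : ℝ) ≠ 0 := by exact_mod_cast Nat.factorial_ne_zero k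
  have h3 : ((m : ℝ) + 1) ≠ 0 := by positivity
  simp only [Nat.add_sub_cancel, h1]
  field_simp
end

section
/- The degenerate Fubini-type polynomials equal 2^{−3α} times the degenerate Apostol-Euler polynomials of order 2α at parameter γ = −1/2: a_n^{(α)}(x;λ) = 2^{−3α} · E_n^{(2α)}(x; λ; −1/2) for all n ≥ 0. -/
open Finset PowerSeries

/-- The power series of `(1+λt)^{x/λ}`, whose coefficients are the
`λ`-falling factorials `(x)_{n,λ} = x(x-λ)⋯(x-(n-1)λ)` divided by `n!`. -/
noncomputable def degExp (lam x : ℝ) : PowerSeries ℝ :=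
  PowerSeries.mk fun n => (∏ j ∈ Finset.range n, (x - j * lam)) / n.factorial

theorem degenerateFubiniType_eq_degenerateApostolEuler (α : ℕ) (lam x : ℝ) (hlam : lam ≠ 0)
    (a E : ℕ → ℝ)
    (ha : ((2 : PowerSeries ℝ) - degExp lam 1) ^ (2 * α) *
          PowerSeries.mk (fun n => a n / n.factorial) =
        (2 : PowerSeries ℝ) ^ α * degExp lam x)
    (hE : (PowerSeries.C (R := ℝ) (-(1 / 2)) * degExp lam 1 + 1) ^ (2 * α) *
          PowerSeries.mk (fun n => E n / n.factorial) =
        (2 : PowerSeries ℝ) ^ (2 * α) * degExp lam x)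
    (n : ℕ) :
    a n = ((2 : ℝ) ^ (3 * α))⁻¹ * E n := by
  set f := degExp lam 1 with hfdef
  have h2 : (2 : PowerSeries ℝ) = PowerSeries.C (R := ℝ) 2 := (map_ofNat (PowerSeries.C (R := ℝ)) 2).symm
  -- rewrite the Euler base
  have hbase : PowerSeries.C (R := ℝ) (-(1 / 2)) * f + 1 =
      PowerSeries.C (R := ℝ) (1 / 2) * ((2 : PowerSeries ℝ) - f) := by
    rw [h2]
    rw [mul_sub, ← map_mul]
    norm_num
    ring
  have hE' : (PowerSeries.C (R := ℝ) (1 / 2)) ^ (2 * α) * (((2 : PowerSeries ℝ) - f) ^ (2 * α) *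
      PowerSeries.mk (fun n => E n / n.factorial)) =
      (2 : PowerSeries ℝ) ^ (2 * α) * degExp lam x := by
    rw [← mul_assoc, ← mul_pow, ← hbase]
    exact hE
  -- multiply by C 2 ^ (2α)
  have hhalf : (PowerSeries.C (R := ℝ) 2) * PowerSeries.C (R := ℝ) (1 / 2) = 1 := by
    rw [← map_mul]; norm_num
  have hE'' : ((2 : PowerSeries ℝ) - f) ^ (2 * α) *
      PowerSeries.mk (fun n => E n / n.factorial) =
      (2 : PowerSeries ℝ) ^ (4 * α) * degExp lam x := by
    have := congrArg (fun g => (PowerSeries.C (R := ℝ) 2) ^ (2 * α) * g) hE'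
    rw [← mul_assoc, ← mul_pow, hhalf, one_pow, one_mul] at this
    rw [this, ← mul_assoc, ← h2, ← pow_add]
    ring_nf
  -- multiply ha by 2^(3α)
  have ha' : ((2 : PowerSeries ℝ) - f) ^ (2 * α) *
      ((2 : PowerSeries ℝ) ^ (3 * α) * PowerSeries.mk (fun n => a n / n.factorial)) =
      (2 : PowerSeries ℝ) ^ (4 * α) * degExp lam x := by
    rw [mul_left_comm, ha, ← mul_assoc, ← pow_add]
    ring_nf
  have hne : ((2 : PowerSeries ℝ) - f) ^ (2 * α) ≠ 0 := by
    apply pow_ne_zero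
    intro h
    have h0 := congrArg (PowerSeries.constantCoeff (R := ℝ)) h
    rw [map_sub, map_ofNat] at h0
    simp [hfdef, degExp, ← PowerSeries.coeff_zero_eq_constantCoeff] at h0
    norm_num at h0
  have key : (2 : PowerSeries ℝ) ^ (3 * α) * PowerSeries.mk (fun n => a n / n.factorial) =
      PowerSeries.mk (fun n => E n / n.factorial) := by
    exact mul_left_cancel₀ hne (ha'.trans hE''.symm)
  have hc := congrArg (PowerSeries.coeff (R := ℝ) n) key
  rw [h2, ← map_pow, PowerSeries.coeff_C_mul] at hc
  simp only [PowerSeries.coeff_mk] at hc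
  have hfact : (n.factorial : ℝ) ≠ 0 := Nat.cast_ne_zero.mpr n.factorial_ne_zero
  have h2pos : ((2 : ℝ) ^ (3 * α)) ≠ 0 := by positivity
  field_simp at hc ⊢
  linarith [hc]
end

section
/- For n ≥ 2α, the degenerate Fubini-type polynomials are related to the degenerate Apostol-Bernoulli polynomials of order 2α with parameter γ = 1/2 by a_{n−2α}^{(α)}(x;λ) = B_n^{(2α)}(x; λ; 1/2) / (2^α · ⟨n⟩_{2α}), where ⟨n⟩_{2α} = n(n−1)⋯(n−2α+1); moreover B_n^{(2α)}(x;λ;1/2) = 0 for 0 ≤ n < 2α. -/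
open Finset PowerSeries

lemma constCoeff_degExp (lam x : ℝ) :
    PowerSeries.constantCoeff (degExp lam x) = 1 := by
  rw [← PowerSeries.coeff_zero_eq_constantCoeff]
  simp [degExp]

lemma fall_nat_eq (n m : ℕ) (h : m ≤ n) :
    fall (n : ℝ) m = (n.descFactorial m : ℝ) := by
  rw [fall, Nat.descFactorial_eq_prod_range, Nat.cast_prod]
  refine Finset.prod_congr rfl fun j hj => ?_
  rw [Nat.cast_sub (le_trans (Finset.mem_range.1 hj).le h)]

theorem degenerateFubiniType_eq_degenerateApostolBernoulli (α : ℕ) (hα : 1 ≤ α)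
    (lam x : ℝ) (hlam : lam ≠ 0) (a B : ℕ → ℝ)
    (ha : ((2 : PowerSeries ℝ) - degExp lam 1) ^ (2 * α) *
          PowerSeries.mk (fun n => a n / n.factorial) =
        (2 : PowerSeries ℝ) ^ α * degExp lam x)
    (hB : (PowerSeries.C (R := ℝ) (1 / 2) * degExp lam 1 - 1) ^ (2 * α) *
          PowerSeries.mk (fun n => B n / n.factorial) =
        (PowerSeries.X : PowerSeries ℝ) ^ (2 * α) * degExp lam x) :
    (∀ n < 2 * α, B n = 0) ∧
      ∀ n, 2 * α ≤ n → a (n - 2 * α) = B n / (2 ^ α * fall (n : ℝ) (2 * α)) := by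
  set E1 := degExp lam 1 with hE1
  set E := degExp lam x with hE
  set A : PowerSeries ℝ := PowerSeries.mk (fun n => a n / n.factorial) with hA
  set Bs : PowerSeries ℝ := PowerSeries.mk (fun n => B n / n.factorial) with hBs
  set U : PowerSeries ℝ := ((2 : PowerSeries ℝ) - E1) ^ (2 * α) with hU
  have hUne : U ≠ 0 := by
    intro h
    have : PowerSeries.constantCoeff U = 0 := by rw [h, map_zero]
    rw [hU, map_pow, map_sub, constCoeff_degExp, map_ofNat] at this
    norm_num at this
  have hfactor : (PowerSeries.C (R := ℝ) (1 / 2) * E1 - 1) ^ (2 * α)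
      * PowerSeries.C (R := ℝ) (2 ^ (2 * α)) = U := by
    have h2 : (PowerSeries.C (R := ℝ) (1 / 2) * E1 - 1) * PowerSeries.C (R := ℝ) 2
        = -((2 : PowerSeries ℝ) - E1) := by
      have h2' : (2 : PowerSeries ℝ) = PowerSeries.C (R := ℝ) 2 := (map_ofNat _ 2).symm
      rw [h2', sub_mul, one_mul, mul_right_comm, ← map_mul]
      norm_num [neg_sub]
    calc (PowerSeries.C (R := ℝ) (1 / 2) * E1 - 1) ^ (2 * α) * PowerSeries.C (R := ℝ) (2 ^ (2 * α))
        = ((PowerSeries.C (R := ℝ) (1 / 2) * E1 - 1) * PowerSeries.C (R := ℝ) 2) ^ (2 * α) := by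
          rw [mul_pow, map_pow]
      _ = (-((2 : PowerSeries ℝ) - E1)) ^ (2 * α) := by rw [h2]
      _ = U := by rw [Even.neg_pow (even_two_mul α)]
  have h2pow : (2 : PowerSeries ℝ) ^ α = PowerSeries.C (R := ℝ) (2 ^ α) := by
    rw [map_pow, map_ofNat]
  have key : Bs = A * PowerSeries.X ^ (2 * α) * PowerSeries.C (R := ℝ) (2 ^ α) := by
    have h1 : U * Bs = PowerSeries.X ^ (2 * α) * E * PowerSeries.C (R := ℝ) (2 ^ (2 * α)) := by
      have := congrArg (· * PowerSeries.C (R := ℝ) (2 ^ (2 * α))) hB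
      rw [mul_right_comm, hfactor] at this
      exact this
    have h2 : E * PowerSeries.C (R := ℝ) (2 ^ (2 * α)) = U * A * PowerSeries.C (R := ℝ) (2 ^ α) := by
      rw [ha, h2pow,
        show (2:ℝ) ^ (2 * α) = 2 ^ α * 2 ^ α by rw [two_mul, pow_add], map_mul]
      ring
    have h3 : U * Bs = U * (A * PowerSeries.X ^ (2 * α) * PowerSeries.C (R := ℝ) (2 ^ α)) := by
      rw [h1, mul_assoc, h2]; ring
    exact mul_left_cancel₀ hUne h3
  have hcoeff : ∀ n, B n / n.factorial =
      (if 2 * α ≤ n then a (n - 2 * α) / (n - 2 * α).factorial else 0) * 2 ^ α := by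
    intro n
    have := congrArg (PowerSeries.coeff n) key
    rwa [hBs, PowerSeries.coeff_mk, PowerSeries.coeff_mul_C,
      PowerSeries.coeff_mul_X_pow', hA, PowerSeries.coeff_mk] at this
  constructor
  · intro n hn
    have := hcoeff n
    rw [if_neg (not_le.2 hn), zero_mul, div_eq_zero_iff] at this
    rcases this with h | h
    · exact h
    · exact absurd h (Nat.cast_ne_zero.2 n.factorial_ne_zero)
  · intro n hn
    have hc := hcoeff n
    rw [if_pos hn] at hc
    have hfall : fall (n : ℝ) (2 * α) = (n.descFactorial (2 * α) : ℝ) :=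
      fall_nat_eq n (2 * α) hn
    have hdf : ((n - 2 * α).factorial : ℝ) * (n.descFactorial (2 * α) : ℝ)
        = (n.factorial : ℝ) := by
      rw [← Nat.cast_mul, Nat.factorial_mul_descFactorial hn]
    have hdne : (n.descFactorial (2 * α) : ℝ) ≠ 0 :=
      Nat.cast_ne_zero.2 (by simpa [Nat.descFactorial_eq_zero_iff_lt] using not_lt.2 hn)
    have hfne : ((n - 2 * α).factorial : ℝ) ≠ 0 :=
      Nat.cast_ne_zero.2 (n - 2 * α).factorial_ne_zero
    have hnfne : (n.factorial : ℝ) ≠ 0 := Nat.cast_ne_zero.2 n.factorial_ne_zero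
    have h2ne : (2 : ℝ) ^ α ≠ 0 := by positivity
    field_simp at hc
    rw [hfall, eq_div_iff (mul_ne_zero h2ne hdne)]
    apply mul_right_cancel₀ hfne
    linear_combination a (n - 2 * α) * 2 ^ α * hdf - hc
end

section
/- The degenerate Fubini-type polynomials satisfy the translation identity a_n^{(α)}(x+1; λ) = 2·a_n^{(α)}(x; λ) − √2 · a_n^{(α−1/2)}(x; λ) for all n ≥ 0, where the half-integer order polynomials are defined by the same generating function with exponent 2(α−1/2) = 2α−1. -/
open Filter

lemma coeffs_eq_zero_of_eventually_hasSum (c : ℕ → ℝ)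
    (h : ∀ᶠ t in nhds (0 : ℝ), HasSum (fun n : ℕ => c n * t ^ n / n.factorial) 0) :
    ∀ n, c n = 0 := by
  obtain ⟨ε, hε, hball⟩ := Metric.eventually_nhds_iff.mp h
  set d : ℕ → ℝ := fun n => c n / n.factorial with hd
  have key : ∀ t : ℝ, |t| < ε → HasSum (fun n => d n * t ^ n) 0 := by
    intro t ht
    have h0 := hball (y := t) (by simpa [Real.dist_eq] using ht)
    have : (fun n : ℕ => d n * t ^ n) = fun n : ℕ => c n * t ^ n / n.factorial := by
      funext n; simp only [hd]; ring
    rw [this]; exact h0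
  set p : FormalMultilinearSeries ℝ ℝ ℝ :=
    fun n => ContinuousMultilinearMap.mkPiRing ℝ (Fin n) (d n) with hp
  have hεhalf : (0 : ℝ) < ε / 2 := by linarith
  set r : NNReal := ⟨ε / 2, hεhalf.le⟩ with hr
  have hrlt : |(ε / 2 : ℝ)| < ε := by rw [abs_of_pos hεhalf]; linarith
  have hsum2 := key (ε / 2) hrlt
  have htend : Tendsto (fun n => ‖p n‖ * (r : ℝ) ^ n) atTop (nhds 0) := by
    have h1 := hsum2.summable.tendsto_atTop_zero
    have h2 : Tendsto (fun n : ℕ => |d n * (ε / 2) ^ n|) atTop (nhds 0) := by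
      simpa using h1.abs
    have heq : (fun n => ‖p n‖ * (r : ℝ) ^ n) = fun n : ℕ => |d n * (ε / 2) ^ n| := by
      funext n
      rw [hp]
      simp only [ContinuousMultilinearMap.norm_mkPiRing]
      rw [abs_mul, abs_pow, abs_of_pos hεhalf]
      rfl
    rw [heq]; exact h2
  have hrad : (r : ENNReal) ≤ p.radius := p.le_radius_of_tendsto htend
  have hfp : HasFPowerSeriesOnBall (0 : ℝ → ℝ) p 0 r :=
    { r_le := hrad
      r_pos := by
        simp only [ENNReal.coe_pos]
        exact_mod_cast hεhalf
      hasSum := by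
        intro y hy
        rw [Metric.emetric_ball_nnreal, Metric.mem_ball, dist_zero_right, Real.norm_eq_abs] at hy
        have hrε : (r : ℝ) = ε / 2 := rfl
        have hy' : |y| < ε := by rw [hrε] at hy; linarith
        have h0 := key y hy'
        have : (fun n : ℕ => p n fun _ : Fin n => y) = fun n : ℕ => d n * y ^ n := by
          funext n
          rw [hp]
          simp [ContinuousMultilinearMap.mkPiRing_apply, smul_eq_mul]
          ring
        rw [this]
        simpa using h0 }
  have hp0 : p = 0 := hfp.hasFPowerSeriesAt.eq_zero
  intro n
  have hpn : p n = 0 := by rw [hp0]; rfl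
  have h1 := congrArg (fun q : ContinuousMultilinearMap ℝ (fun _ : Fin n => ℝ) ℝ =>
    q (fun _ => (1 : ℝ))) hpn
  simp only [hp, ContinuousMultilinearMap.mkPiRing_apply, Finset.prod_const_one, one_smul,
    ContinuousMultilinearMap.zero_apply, smul_eq_mul, one_pow, mul_one] at h1
  have hfac : (n.factorial : ℝ) ≠ 0 := Nat.cast_ne_zero.mpr n.factorial_ne_zero
  have h1' : d n = 0 := by simpa using h1
  have h1'' : c n / (n.factorial : ℝ) = 0 := h1'
  exact (div_eq_zero_iff.mp h1'').resolve_right hfac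

theorem degenerateFubiniType_translation (α lam : ℝ) (hα : 0 < α) (hlam : lam ≠ 0)
    (a : ℝ → ℝ → ℕ → ℝ)
    (ha : ∀ β : ℝ, (β = α ∨ β = α - 1 / 2) → ∀ x : ℝ,
      ∀ᶠ t in nhds (0 : ℝ),
        HasSum (fun n : ℕ => a β x n * t ^ n / n.factorial)
          ((2 : ℝ) ^ β / (2 - (1 + lam * t) ^ (1 / lam)) ^ (2 * β) *
            (1 + lam * t) ^ (x / lam)))
    (n : ℕ) (x : ℝ) :
    a α (x + 1) n = 2 * a α x n - Real.sqrt 2 * a (α - 1 / 2) x n := by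
  have h1 := ha α (Or.inl rfl) (x + 1)
  have h2 := ha α (Or.inl rfl) x
  have h3 := ha (α - 1 / 2) (Or.inr rfl) x
  -- eventual positivity of the base
  have hcont : ContinuousAt (fun t : ℝ => 1 + lam * t) 0 := by fun_prop
  have hval : (1 : ℝ) + lam * 0 = 1 := by ring
  have hpos1 : ∀ᶠ t in nhds (0 : ℝ), 0 < 1 + lam * t := by
    have := hcont.tendsto
    rw [hval] at this
    exact this.eventually (eventually_gt_nhds one_pos)
  have hcont2 : ContinuousAt (fun t : ℝ => (1 + lam * t) ^ (1 / lam)) 0 :=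
    hcont.rpow_const (Or.inl (by rw [hval]; exact one_ne_zero))
  have hpos2 : ∀ᶠ t in nhds (0 : ℝ), (1 + lam * t) ^ (1 / lam) < 2 := by
    have htd := hcont2.tendsto
    rw [show (1 + lam * 0 : ℝ) ^ (1 / lam) = 1 by rw [show (1 + lam * 0 : ℝ) = 1 by ring, Real.one_rpow]] at htd
    exact htd.eventually (eventually_lt_nhds one_lt_two)
  set c : ℕ → ℝ := fun n =>
    a α (x + 1) n - (2 * a α x n - Real.sqrt 2 * a (α - 1 / 2) x n) with hc
  have hkey : ∀ n, c n = 0 := by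
    apply coeffs_eq_zero_of_eventually_hasSum
    filter_upwards [h1, h2, h3, hpos1, hpos2] with t hs1 hs2 hs3 hb hu
    set b : ℝ := 1 + lam * t with hbdef
    set u : ℝ := b ^ (1 / lam) with hu'
    set v : ℝ := 2 - u with hv'
    have hvpos : 0 < v := by simp only [hv']; linarith
    have hw : b ^ ((x + 1) / lam) = b ^ (x / lam) * u := by
      rw [show (x + 1) / lam = x / lam + 1 / lam by ring, Real.rpow_add hb]
    have hsqrt : Real.sqrt 2 * (2 : ℝ) ^ (α - 1 / 2) = (2 : ℝ) ^ α := by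
      rw [Real.sqrt_eq_rpow, ← Real.rpow_add two_pos]
      norm_num
    have hvv : v ^ (2 * (α - 1 / 2)) = v ^ (2 * α) / v := by
      rw [show 2 * (α - 1 / 2) = 2 * α - 1 by ring, Real.rpow_sub hvpos, Real.rpow_one]
    have hSeq : (2 : ℝ) ^ α / v ^ (2 * α) * b ^ ((x + 1) / lam) =
        2 * ((2 : ℝ) ^ α / v ^ (2 * α) * b ^ (x / lam)) -
          Real.sqrt 2 * ((2 : ℝ) ^ (α - 1 / 2) / v ^ (2 * (α - 1 / 2)) * b ^ (x / lam)) := by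
      have hvne : v ^ (2 * α) ≠ 0 := (Real.rpow_pos_of_pos hvpos _).ne'
      have hvne' : v ≠ 0 := hvpos.ne'
      rw [hw, hvv]
      set A := (2:ℝ) ^ α with hA
      set B := (2:ℝ) ^ (α - 1/2) with hB
      rw [show u = 2 - v from by simp [hv']]
      field_simp
      ring_nf
      ring_nf at hsqrt
      linear_combination (2 - u) * hsqrt
    have H := hs1.sub ((hs2.mul_left 2).sub (hs3.mul_left (Real.sqrt 2)))
    have hfun : (fun n : ℕ => c n * t ^ n / n.factorial) =
        fun n : ℕ => a α (x + 1) n * t ^ n / n.factorial -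
          (2 * (a α x n * t ^ n / n.factorial) -
            Real.sqrt 2 * (a (α - 1 / 2) x n * t ^ n / n.factorial)) := by
      funext m; simp only [hc]; ring
    rw [hfun]
    convert H using 1
    · rfl
    rw [hSeq]; ring
  have := hkey n
  simp only [hc] at this
  linarith
end

section
/- The degenerate Fubini-type polynomials satisfy the recurrence a_{n+1}^{(α)}(y + λ; λ) = (y + λ)·a_n^{(α)}(y; λ) + √2·α·a_n^{(α+1/2)}(y + 1; λ) for all n ≥ 0. -/
open Filter

open FormalMultilinearSeries in
lemma coeff_eq_iteratedDeriv_aux {c : ℕ → ℝ} {f : ℝ → ℝ}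
    (h : ∀ᶠ t in nhds (0:ℝ), HasSum (fun n : ℕ => c n * t ^ n / n.factorial) (f t)) (n : ℕ) :
    c n = iteratedDeriv n f 0 := by
  obtain ⟨ε, hε, hball⟩ := Metric.eventually_nhds_iff.mp h
  set p : FormalMultilinearSeries ℝ ℝ ℝ := ofScalars ℝ (fun n => c n / n.factorial) with hp
  have happ : ∀ (m : ℕ) (t : ℝ), (p m fun _ => t) = c m * t ^ m / m.factorial := by
    intro m t
    rw [hp, ofScalars_apply_eq, smul_eq_mul, div_mul_eq_mul_div]
  have hsum : ∀ t : ℝ, |t| < ε → HasSum (fun m => p m fun _ => t) (f t) := by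
    intro t ht
    have h1 := hball (y := t) (by simpa [Real.dist_eq] using ht)
    simpa [happ] using h1
  set r : NNReal := ⟨ε/2, by positivity⟩ with hr
  have hrc : (r : ℝ) = ε/2 := rfl
  have hεr : |(ε/2 : ℝ)| < ε := by rw [abs_of_pos (by positivity)]; linarith
  have hrad : (r : ENNReal) ≤ p.radius := by
    have hs := (hsum (ε/2) hεr).summable
    have htend := hs.tendsto_atTop_zero.abs
    simp only [happ] at htend
    obtain ⟨C, hC⟩ := htend.bddAbove_range
    refine p.le_radius_of_bound C fun m => ?_
    have h1 : ‖p m‖ * (r : ℝ) ^ m = |c m * (ε/2) ^ m / m.factorial| := by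
      rw [hp, ofScalars_norm, hrc, Real.norm_eq_abs, abs_div, abs_div, abs_mul, abs_pow,
        abs_of_pos (show (0:ℝ) < ε/2 by positivity),
        abs_of_pos (show (0:ℝ) < (m.factorial : ℝ) by positivity)]
      ring
    rw [h1]
    exact hC ⟨m, rfl⟩
  have hrpos : (0 : ENNReal) < r := by
    refine ENNReal.coe_pos.mpr ?_
    rw [← NNReal.coe_lt_coe, hrc]
    positivity
  have hball' : HasFPowerSeriesOnBall f p 0 r := by
    refine ⟨hrad, hrpos, fun {t} ht => ?_⟩
    rw [mem_emetric_ball_zero_iff] at ht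
    replace ht : ‖t‖₊ < r := ENNReal.coe_lt_coe.mp ht
    rw [← NNReal.coe_lt_coe, coe_nnnorm,
      Real.norm_eq_abs, hrc] at ht
    have : |t| < ε := by linarith
    simpa using hsum t this
  have hkey := hball'.factorial_smul (1:ℝ) n
  rw [happ n 1] at hkey
  rw [iteratedDeriv_eq_iteratedFDeriv, ← hkey]
  have h2 : (n.factorial : ℝ) ≠ 0 := Nat.cast_ne_zero.mpr n.factorial_ne_zero
  simp only [one_pow, mul_one, nsmul_eq_mul]
  field_simp

lemma hasDerivAt_G_aux (α lam y : ℝ) (hlam : lam ≠ 0) (t : ℝ)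
    (hP : 0 < 1 + lam * t) (hQ : 0 < 2 - (1 + lam * t) ^ (1 / lam)) :
    HasDerivAt (fun s => (2:ℝ) ^ α / (2 - (1 + lam * s) ^ (1 / lam)) ^ (2 * α) *
        (1 + lam * s) ^ ((y + lam) / lam))
      ((y + lam) * ((2:ℝ) ^ α / (2 - (1 + lam * t) ^ (1 / lam)) ^ (2 * α) *
          (1 + lam * t) ^ (y / lam)) +
        Real.sqrt 2 * α * ((2:ℝ) ^ (α + 1 / 2) /
          (2 - (1 + lam * t) ^ (1 / lam)) ^ (2 * (α + 1 / 2)) *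
          (1 + lam * t) ^ ((y + 1) / lam))) t := by
  set P : ℝ := 1 + lam * t with hPdef
  set Q : ℝ := 2 - P ^ (1 / lam) with hQdef
  have hu : HasDerivAt (fun s => 1 + lam * s) lam t := by
    simpa using ((hasDerivAt_id t).const_mul lam).const_add 1
  have hv : HasDerivAt (fun s => (1 + lam * s) ^ (1 / lam))
      (lam * (1 / lam) * P ^ (1 / lam - 1)) t := hu.rpow_const (Or.inl hP.ne')
  rw [show lam * (1 / lam) * P ^ (1 / lam - 1) = P ^ (1 / lam - 1) by field_simp] at hv
  have hq : HasDerivAt (fun s => 2 - (1 + lam * s) ^ (1 / lam)) (-(P ^ (1 / lam - 1))) t :=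
    hv.const_sub 2
  have hw : HasDerivAt (fun s => (2 - (1 + lam * s) ^ (1 / lam)) ^ (2 * α))
      (-(P ^ (1 / lam - 1)) * (2 * α) * Q ^ (2 * α - 1)) t := hq.rpow_const (Or.inl hQ.ne')
  have hz : HasDerivAt (fun s => (1 + lam * s) ^ ((y + lam) / lam))
      (lam * ((y + lam) / lam) * P ^ ((y + lam) / lam - 1)) t := hu.rpow_const (Or.inl hP.ne')
  rw [show lam * ((y + lam) / lam) * P ^ ((y + lam) / lam - 1)
      = (y + lam) * P ^ ((y + lam) / lam - 1) by field_simp] at hz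
  have ha : (0:ℝ) < Q ^ (2 * α) := Real.rpow_pos_of_pos hQ _
  have hdiv : HasDerivAt (fun s => (2:ℝ) ^ α / (2 - (1 + lam * s) ^ (1 / lam)) ^ (2 * α))
      ((0 * Q ^ (2 * α) - (2:ℝ) ^ α * (-(P ^ (1 / lam - 1)) * (2 * α) * Q ^ (2 * α - 1))) /
        (Q ^ (2 * α)) ^ 2) t := (hasDerivAt_const t ((2:ℝ) ^ α)).div hw ha.ne'
  have hmul := hdiv.mul hz
  convert hmul using 1
  · rfl
  · rfl
  · rfl
  have e1 : P ^ ((y + lam) / lam - 1) = P ^ (y / lam) := by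
    congr 1; field_simp; ring
  have e2 : P ^ (1 / lam - 1) * P ^ ((y + lam) / lam) = P ^ ((y + 1) / lam) := by
    rw [← Real.rpow_add hP]; congr 1; field_simp; ring
  have e3 : Q ^ (2 * α - 1) * Q ^ (2 * (α + 1 / 2)) = Q ^ (2 * α) * Q ^ (2 * α) := by
    rw [← Real.rpow_add hQ, ← Real.rpow_add hQ]; congr 1; ring
  have e4 : Real.sqrt 2 * (2:ℝ) ^ (α + 1 / 2) = 2 * (2:ℝ) ^ α := by
    rw [Real.sqrt_eq_rpow, ← Real.rpow_add two_pos,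
      show (1:ℝ) / 2 + (α + 1 / 2) = α + 1 by ring, Real.rpow_add two_pos, Real.rpow_one]
    ring
  have hb : (0:ℝ) < Q ^ (2 * (α + 1 / 2)) := Real.rpow_pos_of_pos hQ _
  have hc2 : (0:ℝ) < Q ^ (2 * α - 1) := Real.rpow_pos_of_pos hQ _
  rw [e1]
  set A := (2:ℝ) ^ α with hA
  set B := (2:ℝ) ^ (α + 1/2) with hB
  set aa := Q ^ (2 * α) with haa
  set bb := Q ^ (2 * (α + 1/2)) with hbb
  set cc := Q ^ (2 * α - 1) with hcc
  set p1 := P ^ (1 / lam - 1) with hp1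
  set PL := P ^ ((y + lam) / lam) with hPL
  set u1 := P ^ (y / lam) with hu1
  set u2 := P ^ ((y + 1) / lam) with hu2
  have k1 : (0 * aa - A * (-p1 * (2 * α) * cc)) / aa ^ 2 * PL
      = Real.sqrt 2 * α * (B / bb * u2) := by
    rw [← e2, div_mul_eq_mul_div, div_mul_eq_mul_div, ← mul_div_assoc,
      div_eq_div_iff (by positivity) (by positivity)]
    linear_combination (-(α * p1 * PL * aa ^ 2)) * e4 + (2 * α * A * p1 * PL) * e3
  rw [k1]
  ring

theorem degenerateFubiniType_derivRecurrence (α lam : ℝ) (hα : 0 < α) (hlam : lam ≠ 0)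
    (a : ℝ → ℝ → ℕ → ℝ)
    (ha : ∀ β : ℝ, (β = α ∨ β = α + 1 / 2) → ∀ x : ℝ,
      ∀ᶠ t in nhds (0 : ℝ),
        HasSum (fun n : ℕ => a β x n * t ^ n / n.factorial)
          ((2 : ℝ) ^ β / (2 - (1 + lam * t) ^ (1 / lam)) ^ (2 * β) *
            (1 + lam * t) ^ (x / lam)))
    (n : ℕ) (y : ℝ) :
    a α (y + lam) (n + 1) =
      (y + lam) * a α y n + Real.sqrt 2 * α * a (α + 1 / 2) (y + 1) n := by
  set f1 : ℝ → ℝ := fun t => (2:ℝ) ^ α / (2 - (1 + lam * t) ^ (1 / lam)) ^ (2 * α) *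
    (1 + lam * t) ^ ((y + lam) / lam) with hf1
  set f2 : ℝ → ℝ := fun t => (2:ℝ) ^ α / (2 - (1 + lam * t) ^ (1 / lam)) ^ (2 * α) *
    (1 + lam * t) ^ (y / lam) with hf2
  set f3 : ℝ → ℝ := fun t => (2:ℝ) ^ (α + 1 / 2) /
    (2 - (1 + lam * t) ^ (1 / lam)) ^ (2 * (α + 1 / 2)) *
    (1 + lam * t) ^ ((y + 1) / lam) with hf3
  set H : ℝ → ℝ := fun t => (y + lam) * f2 t + Real.sqrt 2 * α * f3 t with hH
  have h1 : ∀ m, a α (y + lam) m = iteratedDeriv m f1 0 :=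
    coeff_eq_iteratedDeriv_aux (ha α (Or.inl rfl) (y + lam))
  have hHsum : ∀ᶠ t in nhds (0:ℝ),
      HasSum (fun m : ℕ => ((y + lam) * a α y m + Real.sqrt 2 * α * a (α + 1 / 2) (y + 1) m)
        * t ^ m / m.factorial) (H t) := by
    filter_upwards [ha α (Or.inl rfl) y, ha (α + 1 / 2) (Or.inr rfl) (y + 1)] with t hs2 hs3
    have heq : (fun m : ℕ => ((y + lam) * a α y m + Real.sqrt 2 * α * a (α + 1 / 2) (y + 1) m)
        * t ^ m / m.factorial)
        = fun m : ℕ => (y + lam) * (a α y m * t ^ m / m.factorial) +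
          Real.sqrt 2 * α * (a (α + 1 / 2) (y + 1) m * t ^ m / m.factorial) :=
      funext fun m => by ring
    rw [heq]
    exact (hs2.mul_left _).add (hs3.mul_left _)
  have h4 : ∀ m, (y + lam) * a α y m + Real.sqrt 2 * α * a (α + 1 / 2) (y + 1) m
      = iteratedDeriv m H 0 := coeff_eq_iteratedDeriv_aux hHsum
  have c1 : Filter.Tendsto (fun t : ℝ => 1 + lam * t) (nhds 0) (nhds 1) := by
    have hcont : Continuous (fun t : ℝ => 1 + lam * t) := by continuity
    simpa using hcont.tendsto (0:ℝ)
  have hev1 : ∀ᶠ t in nhds (0:ℝ), 0 < 1 + lam * t := c1.eventually (eventually_gt_nhds one_pos)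
  have c2 : Filter.Tendsto (fun t : ℝ => 2 - (1 + lam * t) ^ (1 / lam)) (nhds 0) (nhds 1) := by
    have hrc : ContinuousAt (fun z : ℝ => z ^ (1 / lam)) 1 :=
      Real.continuousAt_rpow_const 1 (1 / lam) (Or.inl one_ne_zero)
    have h2 : Filter.Tendsto (fun t : ℝ => (1 + lam * t) ^ (1 / lam)) (nhds 0) (nhds 1) := by
      have := hrc.tendsto.comp c1
      simpa [Real.one_rpow, Function.comp_def] using this
    have h3 := (tendsto_const_nhds (x := (2:ℝ))).sub h2
    rw [show (2:ℝ) - 1 = 1 by norm_num] at h3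
    exact h3
  have hev2 : ∀ᶠ t in nhds (0:ℝ), 0 < 2 - (1 + lam * t) ^ (1 / lam) :=
    c2.eventually (eventually_gt_nhds one_pos)
  have hder : deriv f1 =ᶠ[nhds (0:ℝ)] H := by
    filter_upwards [hev1, hev2] with t hp hq
    exact (hasDerivAt_G_aux α lam y hlam t hp hq).deriv
  calc a α (y + lam) (n + 1) = iteratedDeriv (n + 1) f1 0 := h1 (n + 1)
    _ = iteratedDeriv n (deriv f1) 0 := by rw [iteratedDeriv_succ']
    _ = iteratedDeriv n H 0 := hder.iteratedDeriv_eq n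
    _ = (y + lam) * a α y n + Real.sqrt 2 * α * a (α + 1 / 2) (y + 1) n := (h4 n).symm
end

section
/- The Fubini-type polynomials satisfy the recurrence a_{n+1}^{(α)}(y) = y·a_n^{(α)}(y) + √2·α·a_n^{(α+1/2)}(y+1) for all n ≥ 0. -/
open Filter

lemma iteratedDeriv_eq_of_hasSum {c : ℕ → ℝ} {f : ℝ → ℝ}
    (h : ∀ᶠ t in nhds (0:ℝ), HasSum (fun n : ℕ => c n * t ^ n / n.factorial) (f t)) (k : ℕ) :
    iteratedDeriv k f 0 = c k := by
  obtain ⟨ε, hε, hball⟩ := Metric.eventually_nhds_iff.1 h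
  have hsum : ∀ t : ℝ, |t| < ε → HasSum (fun n : ℕ => c n * t ^ n / n.factorial) (f t) := by
    intro t ht
    exact hball (by simpa [Real.dist_eq] using ht)
  set r : NNReal := ⟨ε/2, by positivity⟩ with hrdef
  have hrε : (r : ℝ) < ε := by show ε/2 < ε; linarith
  have hr0 : (0:ℝ) < r := by show (0:ℝ) < ε/2; positivity
  set p := FormalMultilinearSeries.ofScalars ℝ (fun n => c n / n.factorial) with hp
  have hrad : (r : ENNReal) ≤ p.radius := by
    apply p.le_radius_of_summable
    have hs := ((hsum r (by rwa [abs_of_nonneg (le_of_lt hr0)])).summable).abs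
    apply hs.congr
    intro n
    rw [hp, FormalMultilinearSeries.ofScalars_norm, Real.norm_eq_abs]
    rw [abs_div, abs_mul, abs_pow, abs_of_nonneg (le_of_lt hr0), Nat.abs_cast]
    rw [abs_div, Nat.abs_cast]
    ring
  have hFP : HasFPowerSeriesOnBall f p 0 r := by
    refine ⟨hrad, by exact_mod_cast hr0, ?_⟩
    intro z hz
    have hz' : |z| < ε := by
      rw [Metric.emetric_ball_nnreal, Metric.mem_ball, dist_zero_right, Real.norm_eq_abs] at hz
      exact hz.trans hrε
    have := hsum z hz'
    rw [zero_add]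
    have heq : (fun n : ℕ => p n fun _ => z) = fun n : ℕ => c n * z ^ n / n.factorial := by
      funext m
      rw [hp, FormalMultilinearSeries.ofScalars_apply_eq, smul_eq_mul]
      ring
    rw [heq]
    exact this
  have := hFP.factorial_smul (1:ℝ) k
  rw [iteratedDeriv_eq_iteratedFDeriv, ← this, hp,
    FormalMultilinearSeries.ofScalars_apply_eq, one_pow, smul_eq_mul, mul_one, nsmul_eq_mul]
  field_simp

theorem fubiniType_derivRecurrence (α : ℝ) (hα : 0 < α)
    (a : ℝ → ℝ → ℕ → ℝ)
    (ha : ∀ β : ℝ, (β = α ∨ β = α + 1 / 2) → ∀ y : ℝ,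
      ∀ᶠ t in nhds (0 : ℝ),
        HasSum (fun n : ℕ => a β y n * t ^ n / n.factorial)
          ((2 : ℝ) ^ β / (2 - Real.exp t) ^ (2 * β) * Real.exp (y * t)))
    (n : ℕ) (y : ℝ) :
    a α y (n + 1) = y * a α y n + Real.sqrt 2 * α * a (α + 1 / 2) (y + 1) n := by
  have hA := iteratedDeriv_eq_of_hasSum (ha α (Or.inl rfl) y)
  have hB := iteratedDeriv_eq_of_hasSum (ha (α + 1/2) (Or.inr rfl) (y+1))
  set F : ℝ → ℝ := fun t => (2:ℝ)^α / (2 - Real.exp t) ^ (2*α) * Real.exp (y*t) with hF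
  set G : ℝ → ℝ := fun t => (2:ℝ)^(α+1/2) / (2 - Real.exp t) ^ (2*(α+1/2)) * Real.exp ((y+1)*t) with hG
  have hderiv : ∀ t : ℝ, Real.exp t < 2 →
      HasDerivAt F (y * F t + Real.sqrt 2 * α * G t) t := by
    intro t ht
    have hu : (0:ℝ) < 2 - Real.exp t := by linarith
    have h1 : HasDerivAt (fun s => 2 - Real.exp s) (-Real.exp t) t :=
      (Real.hasDerivAt_exp t).const_sub 2
    have h2 : HasDerivAt (fun s => (2 - Real.exp s) ^ (2*α))
        (2*α * (2 - Real.exp t) ^ (2*α - 1) * (-Real.exp t)) t := by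
      have := h1.rpow_const (p := 2*α) (Or.inl hu.ne')
      convert this using 1
      ring
    have h3 : HasDerivAt (fun s => (2:ℝ)^α / (2 - Real.exp s) ^ (2*α))
        ((0 * ((2 - Real.exp t)^(2*α)) -
          (2:ℝ)^α * (2*α * (2 - Real.exp t) ^ (2*α - 1) * (-Real.exp t))) /
            ((2 - Real.exp t)^(2*α))^2) t :=
      (hasDerivAt_const t ((2:ℝ)^α)).div h2 (by positivity)
    have h4 : HasDerivAt (fun s => Real.exp (y*s)) (Real.exp (y*t) * (y*1)) t :=
      ((hasDerivAt_id t).const_mul y).exp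
    have h5 := h3.mul h4
    rw [hF, hG]
    convert h5 using 1
    case e'_4 => rfl
    case e'_5 => rfl
    case e'_8 => rfl
    beta_reduce
    have h2a : (2 - Real.exp t) ^ (2*α) ≠ 0 := by positivity
    have e1 : (2 - Real.exp t) ^ (2*(α+1/2)) = (2 - Real.exp t) ^ (2*α) * (2 - Real.exp t) := by
      rw [show 2*(α+1/2) = 2*α + 1 by ring, Real.rpow_add_one hu.ne']
    have e2 : Real.sqrt 2 * (2:ℝ)^(α+1/2) = 2 * (2:ℝ)^α := by
      rw [Real.sqrt_eq_rpow, ← Real.rpow_add (by norm_num : (0:ℝ) < 2),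
        show (1/2:ℝ) + (α+1/2) = α + 1 by ring,
        Real.rpow_add_one (by norm_num : (2:ℝ) ≠ 0)]
      ring
    have e3 : Real.exp ((y+1)*t) = Real.exp (y*t) * Real.exp t := by
      rw [← Real.exp_add]; ring_nf
    have e4 : (2 - Real.exp t)^(2*α - 1) = (2 - Real.exp t)^(2*α) / (2 - Real.exp t) := by
      rw [eq_div_iff hu.ne', ← Real.rpow_add_one hu.ne']; norm_num
    rw [e1, e3, e4]
    have e5 : Real.sqrt 2 * α * ((2:ℝ)^(α+1/2) / ((2 - Real.exp t)^(2*α) * (2 - Real.exp t)) *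
        (Real.exp (y*t) * Real.exp t)) = α * (Real.sqrt 2 * (2:ℝ)^(α+1/2)) /
        ((2 - Real.exp t)^(2*α) * (2 - Real.exp t)) * (Real.exp (y*t) * Real.exp t) := by ring
    rw [e5, e2]
    field_simp
    ring
  have hev : deriv F =ᶠ[nhds 0] fun t => y * F t + Real.sqrt 2 * α * G t := by
    have hlt : ∀ᶠ t in nhds (0:ℝ), Real.exp t < 2 := by
      have h0 : Real.exp 0 < 2 := by rw [Real.exp_zero]; norm_num
      exact (Real.continuous_exp.tendsto 0).eventually_lt_const h0
    filter_upwards [hlt] with t ht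
    exact (hderiv t ht).deriv
  have hH : ∀ᶠ t in nhds (0:ℝ), HasSum
      (fun k : ℕ => (y * a α y k + Real.sqrt 2 * α * a (α + 1/2) (y+1) k) * t ^ k / k.factorial)
      (y * F t + Real.sqrt 2 * α * G t) := by
    filter_upwards [ha α (Or.inl rfl) y, ha (α + 1/2) (Or.inr rfl) (y+1)] with t h1 h2
    have h3 := (h1.mul_left y).add (h2.mul_left (Real.sqrt 2 * α))
    have heq : (fun k : ℕ => (y * a α y k + Real.sqrt 2 * α * a (α + 1/2) (y+1) k) * t ^ k / k.factorial)
        = fun k : ℕ => y * (a α y k * t ^ k / k.factorial)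
            + Real.sqrt 2 * α * (a (α + 1/2) (y+1) k * t ^ k / k.factorial) := by
      funext k; ring
    rw [heq]
    exact h3
  calc a α y (n + 1) = iteratedDeriv (n+1) F 0 := (hA (n+1)).symm
    _ = iteratedDeriv n (deriv F) 0 := by rw [iteratedDeriv_succ']
    _ = iteratedDeriv n (fun t => y * F t + Real.sqrt 2 * α * G t) 0 := hev.iteratedDeriv_eq n
    _ = y * a α y n + Real.sqrt 2 * α * a (α + 1/2) (y+1) n := iteratedDeriv_eq_of_hasSum hH n
end

section
/- The k-th derivative of (2−e^t)^{−2α} evaluated at t = 0 equals Σ_{i=0}^{k} ⟨−2α⟩_i · (−1)^i · S(k,i), where S(k,i) are the Stirling numbers of the second kind. -/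
open Finset

/-- Stirling numbers of the second kind. -/
def stirling2 : ℕ → ℕ → ℕ
  | 0, 0 => 1
  | 0, _ + 1 => 0
  | _ + 1, 0 => 0
  | n + 1, k + 1 => (k + 1) * stirling2 n (k + 1) + stirling2 n k

lemma stirling2_eq_zero : ∀ {n j : ℕ}, n < j → stirling2 n j = 0 := by
  intro n
  induction n with
  | zero =>
    intro j hj
    match j, hj with
    | j + 1, _ => rfl
  | succ n ih =>
    intro j hj
    match j, hj with
    | j + 1, hj =>
      show (j + 1) * stirling2 n (j + 1) + stirling2 n j = 0
      rw [ih (by omega), ih (by omega)]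
      ring

noncomputable def gfun (α i : ℕ) (t : ℝ) : ℝ :=
  Real.exp t ^ i * (2 - Real.exp t) ^ (-(2 * (α : ℤ) + (i : ℤ)))

lemma gfun_hasDerivAt (α i : ℕ) {t : ℝ} (ht : Real.exp t < 2) :
    HasDerivAt (gfun α i)
      ((i : ℝ) * gfun α i t + (2 * (α : ℝ) + i) * gfun α (i + 1) t) t := by
  have hne : (2 : ℝ) - Real.exp t ≠ 0 := by linarith
  have h1 : HasDerivAt (fun t => Real.exp t ^ i) ((i : ℝ) * Real.exp t ^ i) t := by
    have := (Real.hasDerivAt_exp t).pow i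
    refine this.congr_deriv ?_
    cases i with
    | zero => simp
    | succ n => push_cast; rw [pow_succ]; ring
  have hb : HasDerivAt (fun t : ℝ => 2 - Real.exp t) (-Real.exp t) t := by
    simpa using (Real.hasDerivAt_exp t).const_sub 2
  have h2 : HasDerivAt (fun t => (2 - Real.exp t) ^ (-(2 * (α : ℤ) + (i : ℤ))))
      ((2 * (α : ℝ) + i) * Real.exp t *
        (2 - Real.exp t) ^ (-(2 * (α : ℤ) + (i : ℤ) + 1))) t := by
    have h := (hasDerivAt_zpow (-(2 * (α : ℤ) + (i : ℤ))) (2 - Real.exp t)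
        (Or.inl hne)).comp t hb
    refine h.congr_deriv ?_
    have hexp : -(2 * (α : ℤ) + (i : ℤ)) - 1 = -(2 * (α : ℤ) + (i : ℤ) + 1) := by ring
    rw [hexp]
    push_cast
    ring
  have h := h1.mul h2
  refine h.congr_deriv ?_
  simp only [gfun]
  have hexp : -(2 * (α : ℤ) + ((i : ℤ) + 1)) = -(2 * (α : ℤ) + (i : ℤ) + 1) := by ring
  push_cast
  rw [hexp, pow_succ]
  ring

lemma sum_step (m : ℝ) (k : ℕ) (G : ℕ → ℝ) :
    ∑ i ∈ range (k + 1), (∏ j ∈ range i, (m + j)) * (stirling2 k i : ℝ) *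
      ((i : ℝ) * G i + (m + i) * G (i + 1)) =
    ∑ i ∈ range (k + 2), (∏ j ∈ range i, (m + j)) * (stirling2 (k + 1) i : ℝ) * G i := by
  conv_rhs => rw [Finset.sum_range_succ' _ (k + 1)]
  have h0 : stirling2 (k + 1) 0 = 0 := rfl
  rw [h0]
  simp only [Nat.cast_zero, mul_zero, zero_mul, add_zero]
  have hrec : ∀ i : ℕ, (stirling2 (k + 1) (i + 1) : ℝ)
      = (i + 1) * stirling2 k (i + 1) + stirling2 k i := by
    intro i
    show ((((i + 1) * stirling2 k (i + 1) + stirling2 k i : ℕ)) : ℝ) = _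
    push_cast
    ring
  simp only [hrec, Finset.prod_range_succ]
  have split : ∀ i : ℕ,
      (∏ j ∈ range i, (m + j)) * (stirling2 k i : ℝ) *
        ((i : ℝ) * G i + (m + i) * G (i + 1))
      = (∏ j ∈ range i, (m + j)) * (stirling2 k i : ℝ) * (i : ℝ) * G i
        + (∏ j ∈ range i, (m + j)) * (stirling2 k i : ℝ) * (m + i) * G (i + 1) := by
    intro i; ring
  simp only [split]
  rw [Finset.sum_add_distrib]
  have hA : ∑ i ∈ range (k + 1),
      (∏ j ∈ range i, (m + j)) * (stirling2 k i : ℝ) * (i : ℝ) * G i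
      = ∑ i ∈ range (k + 1),
        (∏ j ∈ range i, (m + j)) * (m + i) * ((i + 1 : ℝ) * stirling2 k (i + 1)) * G (i + 1) := by
    rw [Finset.sum_range_succ' _ k]
    rw [Finset.sum_range_succ _ k]
    rw [stirling2_eq_zero (Nat.lt_succ_self k)]
    simp only [Nat.cast_zero, mul_zero, zero_mul, add_zero, Nat.cast_ofNat]
    apply Finset.sum_congr rfl
    intro i _
    rw [Finset.prod_range_succ]
    push_cast
    ring
  rw [hA, ← Finset.sum_add_distrib]
  apply Finset.sum_congr rfl
  intro i _
  ring

lemma main_aux (α k : ℕ) : ∀ t : ℝ, Real.exp t < 2 →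
    iteratedDeriv k (fun t : ℝ => ((2 - Real.exp t) ^ (2 * α) : ℝ)⁻¹) t =
      ∑ i ∈ Finset.range (k + 1),
        (∏ j ∈ Finset.range i, (2 * (α : ℝ) + j)) * (stirling2 k i : ℝ) * gfun α i t := by
  induction k with
  | zero =>
    intro t ht
    rw [iteratedDeriv_zero]
    show ((2 - Real.exp t) ^ (2 * α) : ℝ)⁻¹ = _
    rw [Finset.sum_range_one]
    show _ = (∏ j ∈ Finset.range 0, (2 * (α : ℝ) + j)) * ((1 : ℕ) : ℝ) * gfun α 0 t
    simp only [Finset.prod_range_zero, Nat.cast_one, one_mul, gfun, pow_zero,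
      Nat.cast_zero, add_zero]
    rw [zpow_neg]
    norm_cast
  | succ k ih =>
    intro t ht
    rw [iteratedDeriv_succ]
    have hopen : IsOpen {s : ℝ | Real.exp s < 2} :=
      isOpen_lt Real.continuous_exp continuous_const
    have hU : ∀ᶠ s in nhds t, Real.exp s < 2 := hopen.eventually_mem ht
    have hev : iteratedDeriv k (fun t : ℝ => ((2 - Real.exp t) ^ (2 * α) : ℝ)⁻¹)
        =ᶠ[nhds t] (fun s => ∑ i ∈ Finset.range (k + 1),
          (∏ j ∈ Finset.range i, (2 * (α : ℝ) + j)) * (stirling2 k i : ℝ) * gfun α i s) :=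
      hU.mono (fun s hs => ih s hs)
    rw [hev.deriv_eq]
    have hsum : HasDerivAt (fun s => ∑ i ∈ Finset.range (k + 1),
        (∏ j ∈ Finset.range i, (2 * (α : ℝ) + j)) * (stirling2 k i : ℝ) * gfun α i s)
        (∑ i ∈ Finset.range (k + 1),
          (∏ j ∈ Finset.range i, (2 * (α : ℝ) + j)) * (stirling2 k i : ℝ) *
            ((i : ℝ) * gfun α i t + (2 * (α : ℝ) + i) * gfun α (i + 1) t)) t :=
      HasDerivAt.fun_sum fun i _ => ((gfun_hasDerivAt α i ht).const_mul _)
    rw [hsum.deriv]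
    exact sum_step (2 * (α : ℝ)) k (fun i => gfun α i t)

lemma fall_neg (x : ℝ) : ∀ i : ℕ, fall (-x) i * (-1 : ℝ) ^ i = ∏ j ∈ Finset.range i, (x + j) := by
  intro i
  induction i with
  | zero => simp [fall]
  | succ n ih =>
    simp only [fall, Finset.prod_range_succ, pow_succ] at *
    linear_combination (x + (n : ℝ)) * ih

theorem iteratedDeriv_fubini_genFun (α k : ℕ) :
    iteratedDeriv k (fun t : ℝ => ((2 - Real.exp t) ^ (2 * α) : ℝ)⁻¹) 0 =
      ∑ i ∈ Finset.range (k + 1),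
        fall (-(2 * α : ℝ)) i * (-1 : ℝ) ^ i * (stirling2 k i : ℝ) := by
  rw [main_aux α k 0 (by rw [Real.exp_zero]; norm_num)]
  apply Finset.sum_congr rfl
  intro i _
  have hg : gfun α i 0 = 1 := by
    norm_num [gfun, Real.exp_zero]
  rw [hg, mul_one, ← fall_neg (2 * (α : ℝ)) i]
end
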